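/- Every mixed door, in every planar embedding, can planarly simulate some fully directed door that is not the Case-8 OTtocC door: a directed tunnel of the door simulates a diode, and wiring each undirected tunnel through diodes at both ends yields a fully directed door; if the result would be the OTtocC door, flipping the pair of diodes on one undirected tunnel yields a different fully directed door. -/

import Mathlib

/-- Planar-gadget data on state type `St` and location type `Lc`: a set of traversals
together with a cyclic order of the locations, given as a list (up to rotation and
reflection) containing each location exactly once. -/
structure PGData (St Lc : Type) where
  trav : (St × Lc) → (St × Lc) → Prop
  cyc : List Lc
  cyc_nodup : cyc.Nodup
  cyc_complete : ∀ l, l ∈ cyc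

/-- A planar gadget: finite state and location sets plus planar gadget data. -/
structure PlanarGadget where
  State : Type
  Loc : Type
  stateFin : Fintype State
  locFin : Fintype Loc
  data : PGData State Loc

/-- Make a planar gadget from its data. -/
def mkPG {St Lc : Type} [Fintype St] [Fintype Lc] (d : PGData St Lc) : PlanarGadget :=
  ⟨St, Lc, inferInstance, inferInstance, d⟩

open Classical in
/-- Update the state of one gadget instance in a global state. -/
noncomputable def updState {ι St : Type} (σg : ι → St) (i : ι) (s : St) : ι → St :=
  fun j => if j = i then s else σg j

/-- The cyclic successor of `a` in the list `L`. -/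
noncomputable def cycNext {α : Type} (L : List α) (a : α) : α :=
  letI := Classical.decEq α
  L.getD ((L.idxOf a + 1) % L.length) a

/-- Number of orbits of the function `f` (the equivalence closure of `f x = y`). -/
noncomputable def orbCount {D : Type} (f : D → D) : ℕ :=
  Nat.card (Quotient (⟨Relation.EqvGen fun x y => f x = y,
    Relation.EqvGen.is_equivalence _⟩ : Setoid D))

/-- Number of joint orbits of two functions `f`, `g`. -/
noncomputable def orbCount2 {D : Type} (f g : D → D) : ℕ :=
  Nat.card (Quotient (⟨Relation.EqvGen fun x y => f x = y ∨ g x = y,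
    Relation.EqvGen.is_equivalence _⟩ : Setoid D))
/-- A system of copies of gadgets from the family `fam` (all on the same state and
location types), drawn in the plane, presented as a combinatorial map:
* a finite set `ι` of gadget instances (instance `i` being a copy of `fam (kind i)`) and
  a finite set `J` of junction vertices (points where connections meet freely);
* a finite set `D` of darts with a rotation permutation `σ` and a fixed-point-free edge
  involution `τ` (each connection contributes a pair of darts swapped by `τ`);
* every location of every instance carries exactly one dart, the rotation at an instance
  follows the gadget's cyclic order of locations, and the rotation at a junction is a
  single (arbitrary) cycle on its darts. -/
structure MSystem {St Lc κ : Type} (fam : κ → PGData St Lc) where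
  ι : Type
  instFin : Fintype ι
  kind : ι → κ
  J : Type
  juncFin : Fintype J
  D : Type
  dartFin : Fintype D
  σ : Equiv.Perm D
  τ : Equiv.Perm D
  τ_invol : ∀ d, τ (τ d) = d
  τ_nofix : ∀ d, τ d ≠ d
  vert : D → ι ⊕ J
  port : D → Lc
  port_unique : ∀ (i : ι) (l : Lc), ∃! d : D, vert d = Sum.inl i ∧ port d = l
  σ_vert : ∀ d, vert (σ d) = vert d
  σ_port : ∀ (d : D) (i : ι), vert d = Sum.inl i →
    port (σ d) = cycNext (fam (kind i)).cyc (port d)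
  σ_junc : ∀ (d d' : D) (j : J), vert d = Sum.inr j → vert d' = Sum.inr j →
    Relation.EqvGen (fun x y => σ x = y) d d'

namespace MSystem

variable {St Lc κ : Type} {fam : κ → PGData St Lc}

/-- The position (instance-location or junction) at which a dart is attached. -/
def endpt (S : MSystem fam) (d : S.D) : (S.ι × Lc) ⊕ S.J :=
  match S.vert d with
  | Sum.inl i => Sum.inl (i, S.port d)
  | Sum.inr j => Sum.inr j

/-- The face permutation of the combinatorial map. -/
def facePerm (S : MSystem fam) : S.D → S.D := fun d => S.σ (S.τ d)

/-- Planarity of the combinatorial map, via the Euler characteristic: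
`V + F = E + 2 C` (vertices + faces = edges + 2 · connected components). -/
def IsPlanar (S : MSystem fam) : Prop :=
  orbCount (fun d => S.σ d) + orbCount S.facePerm =
    orbCount (fun d => S.τ d) + 2 * orbCount2 (fun d => S.σ d) (fun d => S.τ d)

/-- `d` is the dart at the instance-location `x`. -/
def IsDartAt (S : MSystem fam) (x : S.ι × Lc) (d : S.D) : Prop :=
  S.vert d = Sum.inl x.1 ∧ S.port d = x.2

end MSystem

/-- A single move of the agent in a planar system: a traversal inside one instance
(changing only that instance's state), or a free move along a connection (an edge of
the map, between the endpoints of a dart and its `τ`-partner). -/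
inductive MStep {St Lc κ : Type} (fam : κ → PGData St Lc) (S : MSystem fam) :
    ((S.ι → St) × ((S.ι × Lc) ⊕ S.J)) → ((S.ι → St) × ((S.ι × Lc) ⊕ S.J)) → Prop
  | trav {σg : S.ι → St} {i : S.ι} {a b : Lc} {s' : St} :
      (fam (S.kind i)).trav (σg i, a) (s', b) →
      MStep fam S (σg, Sum.inl (i, a)) (updState σg i s', Sum.inl (i, b))
  | wire {σg : S.ι → St} (d : S.D) :
      MStep fam S (σg, S.endpt d) (σg, S.endpt (S.τ d))

/-- The planar system `S`, with external locations `ext` and state encoding `enc`,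
is a planar simulation of the planar gadget `H`:
* `ext` identifies the locations of `H` injectively with instance-locations of `S` and
  `enc` encodes the states of `H` injectively as global states of `S`;
* the underlying combinatorial map is planar;
* the reachability behavior between external locations in encoded global states is
  exactly the transitive closure of `H`;
* all external locations lie on one common face of the map, and the cyclic order in
  which that face visits them is the cyclic order of the locations of `H`
  (up to rotation and reflection). -/
def IsPlanarSimulation {St Lc κ : Type} (fam : κ → PGData St Lc) (H : PlanarGadget)
    (S : MSystem fam) (ext : H.Loc → S.ι × Lc) (enc : H.State → (S.ι → St)) : Prop :=
  Function.Injective ext ∧ Function.Injective enc ∧ S.IsPlanar ∧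
  (∀ s s' a b,
      Relation.ReflTransGen (MStep fam S) (enc s, Sum.inl (ext a)) (enc s', Sum.inl (ext b)) ↔
      Relation.ReflTransGen H.data.trav (s, a) (s', b)) ∧
  (∃ r : Bool, ∀ (a : H.Loc) (da db : S.D),
      S.IsDartAt (ext a) da →
      S.IsDartAt (ext (cycNext (if r then H.data.cyc else H.data.cyc.reverse) a)) db →
      ∃ k, 0 < k ∧ S.facePerm^[k] da = db ∧
        ∀ j, 0 < j → j < k → ∀ c, ¬ S.IsDartAt (ext c) (S.facePerm^[j] da))

/-- The family `fam` of planar gadgets can planarly simulate the planar gadget `H`. -/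
def PlanarlySimulatesFam {St Lc κ : Type} (fam : κ → PGData St Lc)
    (H : PlanarGadget) : Prop :=
  ∃ (S : MSystem fam) (ext : H.Loc → S.ι × Lc) (enc : H.State → (S.ι → St)),
    IsPlanarSimulation fam H S ext enc

/-- The planar gadget `G` can planarly simulate the planar gadget `H`. -/
def PlanarlySimulates (G H : PlanarGadget) : Prop :=
  PlanarlySimulatesFam (fun _ : Unit => G.data) H

/-! ### Gadgets.  For 2-state gadgets, state `true` = open, `false` = closed.
A direction flag `true` means the corresponding tunnel is directed. -/

/-- Locations of a door with an opening tunnel. -/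
inductive DoorLoc | O0 | O1 | T0 | T1 | C0 | C1
deriving DecidableEq

instance : Fintype DoorLoc := ⟨{DoorLoc.O0, DoorLoc.O1, DoorLoc.T0, DoorLoc.T1, DoorLoc.C0, DoorLoc.C1}, by intro x; cases x <;> decide⟩

/-- Traversals of a door with an opening tunnel; `dO`, `dT`, `dC` record whether the
opening, traverse, closing tunnels are directed. -/
def doorTrav (dO dT dC : Bool) : (Bool × DoorLoc) → (Bool × DoorLoc) → Prop := fun x y =>
  (x.2 = DoorLoc.O0 ∧ y = (true, DoorLoc.O1)) ∨
  (dO = false ∧ x.2 = DoorLoc.O1 ∧ y = (true, DoorLoc.O0)) ∨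
  (x.1 = true ∧ x.2 = DoorLoc.T0 ∧ y = (true, DoorLoc.T1)) ∨
  (dT = false ∧ x.1 = true ∧ x.2 = DoorLoc.T1 ∧ y = (true, DoorLoc.T0)) ∨
  (x.2 = DoorLoc.C0 ∧ y = (false, DoorLoc.C1)) ∨
  (dC = false ∧ x.2 = DoorLoc.C1 ∧ y = (false, DoorLoc.C0))

/-- Locations of an open-optional door (opening port `O`). -/
inductive ODoorLoc | O | T0 | T1 | C0 | C1
deriving DecidableEq

instance : Fintype ODoorLoc := ⟨{ODoorLoc.O, ODoorLoc.T0, ODoorLoc.T1, ODoorLoc.C0, ODoorLoc.C1}, by intro x; cases x <;> decide⟩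

/-- Traversals of an open-optional door: a visit to its opening port `O` sets the state
to open. -/
def openOptDoorTrav (dT dC : Bool) : (Bool × ODoorLoc) → (Bool × ODoorLoc) → Prop := fun x y =>
  (x.2 = ODoorLoc.O ∧ y = (true, ODoorLoc.O)) ∨
  (x.1 = true ∧ x.2 = ODoorLoc.T0 ∧ y = (true, ODoorLoc.T1)) ∨
  (dT = false ∧ x.1 = true ∧ x.2 = ODoorLoc.T1 ∧ y = (true, ODoorLoc.T0)) ∨
  (x.2 = ODoorLoc.C0 ∧ y = (false, ODoorLoc.C1)) ∨
  (dC = false ∧ x.2 = ODoorLoc.C1 ∧ y = (false, ODoorLoc.C0))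

/-- A diode: a 1-state gadget with one always-traversable directed tunnel. -/
inductive DiodeLoc | inp | out
deriving DecidableEq

instance : Fintype DiodeLoc := ⟨{DiodeLoc.inp, DiodeLoc.out}, by intro x; cases x <;> decide⟩

def pDiode : PlanarGadget :=
  mkPG (⟨fun x y => x.2 = DiodeLoc.inp ∧ y.2 = DiodeLoc.out,
    [DiodeLoc.inp, DiodeLoc.out], by decide, by decide⟩ : PGData Unit DiodeLoc)

/-- Locations of an open-required normal self-closing door. -/
inductive SCDLoc | O0 | O1 | T0 | T1
deriving DecidableEq

instance : Fintype SCDLoc := ⟨{SCDLoc.O0, SCDLoc.O1, SCDLoc.T0, SCDLoc.T1}, by intro x; cases x <;> decide⟩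

/-- Open-required normal self-closing door: opening tunnel `O` (always traversable, sets
the state open), self-closing tunnel `T` (traversable exactly when open, sets closed). -/
def nSCDTrav (dO dT : Bool) : (Bool × SCDLoc) → (Bool × SCDLoc) → Prop := fun x y =>
  (x.2 = SCDLoc.O0 ∧ y = (true, SCDLoc.O1)) ∨
  (dO = false ∧ x.2 = SCDLoc.O1 ∧ y = (true, SCDLoc.O0)) ∨
  (x.1 = true ∧ x.2 = SCDLoc.T0 ∧ y = (false, SCDLoc.T1)) ∨
  (dT = false ∧ x.1 = true ∧ x.2 = SCDLoc.T1 ∧ y = (false, SCDLoc.T0))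

/-- Locations of an open-optional normal self-closing door. -/
inductive OOSCDLoc | O | T0 | T1
deriving DecidableEq

instance : Fintype OOSCDLoc := ⟨{OOSCDLoc.O, OOSCDLoc.T0, OOSCDLoc.T1}, by intro x; cases x <;> decide⟩

/-- Open-optional normal self-closing door: opening port `O` (visit sets the state open),
self-closing tunnel `T` (traversable exactly when open, sets the state closed). -/
def ooSCDTrav (dT : Bool) : (Bool × OOSCDLoc) → (Bool × OOSCDLoc) → Prop := fun x y =>
  (x.2 = OOSCDLoc.O ∧ y = (true, OOSCDLoc.O)) ∨
  (x.1 = true ∧ x.2 = OOSCDLoc.T0 ∧ y = (false, OOSCDLoc.T1)) ∨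
  (dT = false ∧ x.1 = true ∧ x.2 = OOSCDLoc.T1 ∧ y = (false, OOSCDLoc.T0))

/-- The planar directed open-optional normal self-closing door (a 3-location gadget,
whose cyclic order is unique up to rotation and reflection). -/
def pSCD : PlanarGadget :=
  mkPG (⟨ooSCDTrav true, [OOSCDLoc.O, OOSCDLoc.T0, OOSCDLoc.T1],
    by decide, by decide⟩ : PGData Bool OOSCDLoc)

/-- Locations of a symmetric self-closing door. -/
inductive SymSCDLoc | A0 | A1 | B0 | B1
deriving DecidableEq

instance : Fintype SymSCDLoc := ⟨{SymSCDLoc.A0, SymSCDLoc.A1, SymSCDLoc.B0, SymSCDLoc.B1}, by intro x; cases x <;> decide⟩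

/-- Symmetric self-closing door: self-opening tunnel `A` (traversable exactly when
closed, sets open), self-closing tunnel `B` (traversable exactly when open, sets closed). -/
def symSCDTrav (dA dB : Bool) : (Bool × SymSCDLoc) → (Bool × SymSCDLoc) → Prop := fun x y =>
  (x.1 = false ∧ x.2 = SymSCDLoc.A0 ∧ y = (true, SymSCDLoc.A1)) ∨
  (dA = false ∧ x.1 = false ∧ x.2 = SymSCDLoc.A1 ∧ y = (true, SymSCDLoc.A0)) ∨
  (x.1 = true ∧ x.2 = SymSCDLoc.B0 ∧ y = (false, SymSCDLoc.B1)) ∨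
  (dB = false ∧ x.1 = true ∧ x.2 = SymSCDLoc.B1 ∧ y = (false, SymSCDLoc.B0))

/-- Locations of a crossover: tunnels `X0–X1` and `Y0–Y1`. -/
inductive XLoc | X0 | Y0 | X1 | Y1
deriving DecidableEq

instance : Fintype XLoc := ⟨{XLoc.X0, XLoc.Y0, XLoc.X1, XLoc.Y1}, by intro x; cases x <;> decide⟩

/-- The cyclic order of a crossover: the locations of its two tunnels alternate. -/
def crossCyc : List XLoc := [XLoc.X0, XLoc.Y0, XLoc.X1, XLoc.Y1]

/-- The directed crossover. -/
def pDirCrossover : PlanarGadget :=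
  mkPG (⟨fun x y => (x.2 = XLoc.X0 ∧ y.2 = XLoc.X1) ∨ (x.2 = XLoc.Y0 ∧ y.2 = XLoc.Y1),
    crossCyc, by decide, by decide⟩ : PGData Unit XLoc)

/-- The undirected crossover. -/
def pUndirCrossover : PlanarGadget :=
  mkPG (⟨fun x y =>
      (x.2 = XLoc.X0 ∧ y.2 = XLoc.X1) ∨ (x.2 = XLoc.X1 ∧ y.2 = XLoc.X0) ∨
      (x.2 = XLoc.Y0 ∧ y.2 = XLoc.Y1) ∨ (x.2 = XLoc.Y1 ∧ y.2 = XLoc.Y0),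
    crossCyc, by decide, by decide⟩ : PGData Unit XLoc)

/-- Locations of a tripwire lock: lock tunnel `L0→L1`, tripwire tunnel `W0→W1`. -/
inductive TWLoc | L0 | L1 | W0 | W1
deriving DecidableEq

instance : Fintype TWLoc := ⟨{TWLoc.L0, TWLoc.L1, TWLoc.W0, TWLoc.W1}, by intro x; cases x <;> decide⟩

/-- Traversals of the directed tripwire lock: the lock tunnel is traversable in exactly
one state (`true`) and does not change the state; the tripwire tunnel is always
traversable and toggles the state. -/
def twlTrav : (Bool × TWLoc) → (Bool × TWLoc) → Prop := fun x y =>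
  (x.1 = true ∧ x.2 = TWLoc.L0 ∧ y = (true, TWLoc.L1)) ∨
  (x.2 = TWLoc.W0 ∧ y = (!x.1, TWLoc.W1))

/-- The parallel directed tripwire lock: two non-crossing tunnels oriented the same way. -/
def parTWLData : PGData Bool TWLoc :=
  ⟨twlTrav, [TWLoc.L0, TWLoc.L1, TWLoc.W1, TWLoc.W0], by decide, by decide⟩

/-- The antiparallel directed tripwire lock: two non-crossing tunnels oriented oppositely. -/
def apTWLData : PGData Bool TWLoc :=
  ⟨twlTrav, [TWLoc.L0, TWLoc.L1, TWLoc.W0, TWLoc.W1], by decide, by decide⟩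

def parTWL : PlanarGadget := mkPG parTWLData
def apTWL : PlanarGadget := mkPG apTWLData

/-- Locations of a tripwire-lock-tripwire: tripwires `Wa0→Wa1` and `Wb0→Wb1` on the
outside and lock `L0→L1` between them. -/
inductive TLTLoc | Wa0 | Wa1 | L0 | L1 | Wb0 | Wb1
deriving DecidableEq

instance : Fintype TLTLoc := ⟨{TLTLoc.Wa0, TLTLoc.Wa1, TLTLoc.L0, TLTLoc.L1, TLTLoc.Wb0, TLTLoc.Wb1}, by intro x; cases x <;> decide⟩

/-- Traversals of the directed tripwire-lock-tripwire: both tripwires are always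
traversable and toggle the state; the lock is traversable exactly in state `true`
and does not change the state. -/
def tltTrav : (Bool × TLTLoc) → (Bool × TLTLoc) → Prop := fun x y =>
  (x.2 = TLTLoc.Wa0 ∧ y = (!x.1, TLTLoc.Wa1)) ∨
  (x.1 = true ∧ x.2 = TLTLoc.L0 ∧ y = (true, TLTLoc.L1)) ∨
  (x.2 = TLTLoc.Wb0 ∧ y = (!x.1, TLTLoc.Wb1))

/-- The directed tripwire-lock-tripwire with antiparallel tripwires: three non-crossing
tunnels, the two tripwires on the outside oriented oppositely, the lock in the middle. -/
def pTLT : PlanarGadget :=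
  mkPG (⟨tltTrav,
    [TLTLoc.Wa0, TLTLoc.Wa1, TLTLoc.L1, TLTLoc.Wb0, TLTLoc.Wb1, TLTLoc.L0],
    by decide, by decide⟩ : PGData Bool TLTLoc)

/-! ### The twelve planar fully directed doors without internal crossings,
named by the clockwise cyclic order of their locations, entrances uppercase and exits
lowercase (`O`/`o` opening, `T`/`t` traverse, `C`/`c` closing); opening tunnels with
adjacent endpoints are merged into a single opening port `O`. -/

/-- A fully directed door with an opening port, in a given planar embedding. -/
def portCaseDoor (c : List ODoorLoc) (h1 : c.Nodup) (h2 : ∀ l, l ∈ c) : PlanarGadget :=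
  mkPG (⟨openOptDoorTrav true true, c, h1, h2⟩ : PGData Bool ODoorLoc)

/-- A fully directed door with an opening tunnel, in a given planar embedding. -/
def tunnelCaseDoor (c : List DoorLoc) (h1 : c.Nodup) (h2 : ∀ l, l ∈ c) : PlanarGadget :=
  mkPG (⟨doorTrav true true true, c, h1, h2⟩ : PGData Bool DoorLoc)

/-- Case 1: the OcCTt door. -/
def case1Door : PlanarGadget :=
  portCaseDoor [ODoorLoc.O, ODoorLoc.C1, ODoorLoc.C0, ODoorLoc.T0, ODoorLoc.T1]
    (by decide) (by decide)

/-- Case 2: the OTtCc door. -/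
def case2Door : PlanarGadget :=
  portCaseDoor [ODoorLoc.O, ODoorLoc.T0, ODoorLoc.T1, ODoorLoc.C0, ODoorLoc.C1]
    (by decide) (by decide)

/-- Case 3: the OCcTt door. -/
def case3Door : PlanarGadget :=
  portCaseDoor [ODoorLoc.O, ODoorLoc.C0, ODoorLoc.C1, ODoorLoc.T0, ODoorLoc.T1]
    (by decide) (by decide)

/-- Case 4: the OTtcC door. -/
def case4Door : PlanarGadget :=
  portCaseDoor [ODoorLoc.O, ODoorLoc.T0, ODoorLoc.T1, ODoorLoc.C1, ODoorLoc.C0]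
    (by decide) (by decide)

/-- Case 5: the OtToCc door. -/
def case5Door : PlanarGadget :=
  tunnelCaseDoor [DoorLoc.O0, DoorLoc.T1, DoorLoc.T0, DoorLoc.O1, DoorLoc.C0, DoorLoc.C1]
    (by decide) (by decide)

/-- Case 6: the OTtoCc door. -/
def case6Door : PlanarGadget :=
  tunnelCaseDoor [DoorLoc.O0, DoorLoc.T0, DoorLoc.T1, DoorLoc.O1, DoorLoc.C0, DoorLoc.C1]
    (by decide) (by decide)

/-- Case 7: the OtTocC door. -/
def case7Door : PlanarGadget :=
  tunnelCaseDoor [DoorLoc.O0, DoorLoc.T1, DoorLoc.T0, DoorLoc.O1, DoorLoc.C1, DoorLoc.C0]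
    (by decide) (by decide)

/-- The cyclic order of the Case-8 OTtocC door. -/
def case8Cyc : List DoorLoc :=
  [DoorLoc.O0, DoorLoc.T0, DoorLoc.T1, DoorLoc.O1, DoorLoc.C1, DoorLoc.C0]

/-- Case 8: the OTtocC door. -/
def case8Door : PlanarGadget := tunnelCaseDoor case8Cyc (by decide) (by decide)

/-- Case 9: the OtcCT door. -/
def case9Door : PlanarGadget :=
  portCaseDoor [ODoorLoc.O, ODoorLoc.T1, ODoorLoc.C1, ODoorLoc.C0, ODoorLoc.T0]
    (by decide) (by decide)

/-- Case 10: the OTcCt door. -/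
def case10Door : PlanarGadget :=
  portCaseDoor [ODoorLoc.O, ODoorLoc.T0, ODoorLoc.C1, ODoorLoc.C0, ODoorLoc.T1]
    (by decide) (by decide)

/-- Case 11: the OCTtc door. -/
def case11Door : PlanarGadget :=
  portCaseDoor [ODoorLoc.O, ODoorLoc.C0, ODoorLoc.T0, ODoorLoc.T1, ODoorLoc.C1]
    (by decide) (by decide)

/-- Case 12: the OcTtC door. -/
def case12Door : PlanarGadget :=
  portCaseDoor [ODoorLoc.O, ODoorLoc.C1, ODoorLoc.T0, ODoorLoc.T1, ODoorLoc.C0]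
    (by decide) (by decide)

/-- Two lists are equal as cyclic orders (up to rotation and reflection). -/
def CycEquiv {α : Type} (L M : List α) : Prop :=
  ∃ n : ℕ, M = L.rotate n ∨ M = L.reverse.rotate n

/-- In the cyclic order `c`, the pair `{a, a'}` interleaves with the pair `{b, b'}`
(i.e. the tunnel `a–a'` crosses the tunnel `b–b'` in any planar drawing). -/
def Interleaved {α : Type} (c : List α) (a a' b b' : α) : Prop :=
  letI := Classical.decEq α
  ∃ n : ℕ,
    (c.rotate n).idxOf a = 0 ∧
    (((c.rotate n).idxOf b < (c.rotate n).idxOf a' ∧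
      (c.rotate n).idxOf a' < (c.rotate n).idxOf b') ∨
     ((c.rotate n).idxOf b' < (c.rotate n).idxOf a' ∧
      (c.rotate n).idxOf a' < (c.rotate n).idxOf b))

open Fin.NatCast Fin.CommRing

namespace MD8

abbrev II := Option DoorLoc
abbrev Dart := ((II × DoorLoc) ⊕ (II × DoorLoc))

def Ent : DoorLoc → Bool
  | DoorLoc.O0 => true | DoorLoc.T0 => true | DoorLoc.C0 => true
  | _ => false

def tdin : Fin 3 → DoorLoc := fun u =>
  if u = 0 then DoorLoc.O0 else if u = 1 then DoorLoc.T0 else DoorLoc.C0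
def tdout : Fin 3 → DoorLoc := fun u =>
  if u = 0 then DoorLoc.O1 else if u = 1 then DoorLoc.T1 else DoorLoc.C1
def tsd : Fin 3 → Bool := fun u => if u = 2 then false else true

def uok (u : Fin 3) (dO dT dC : Bool) : Prop :=
  (u = 0 → dO = true) ∧ (u = 1 → dT = true) ∧ (u = 2 → dC = true)

def swapD (x y l : DoorLoc) : DoorLoc := if l = x then y else if l = y then x else l

def alf (w : Fin 4) : DoorLoc → DoorLoc :=
  if w = 1 then swapD DoorLoc.O0 DoorLoc.O1
  else if w = 2 then swapD DoorLoc.T0 DoorLoc.T1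
  else if w = 3 then swapD DoorLoc.C0 DoorLoc.C1
  else id

def wok (w : Fin 4) (dO dT dC : Bool) : Prop :=
  (w = 1 → dO = false) ∧ (w = 2 → dT = false) ∧ (w = 3 → dC = false)

def cpp (u : Fin 3) (p : DoorLoc) : DoorLoc := if Ent p then tdout u else tdin u
def epp (u : Fin 3) (p : DoorLoc) : DoorLoc := if Ent p then tdin u else tdout u

def Mp (u : Fin 3) (w : Fin 4) : II × DoorLoc → II × DoorLoc
  | (none, q) => (some (alf w q), cpp u (alf w q))
  | (some p, l) => if l = cpp u p then (none, alf w p) else (some p, l)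

def tauf (u : Fin 3) (w : Fin 4) : Dart → Dart
  | Sum.inl x => if Mp u w x = x then Sum.inr x else Sum.inl (Mp u w x)
  | Sum.inr x => if Mp u w x = x then Sum.inl x else Sum.inr (Mp u w x)

def sigf (n : DoorLoc → DoorLoc) : Dart → Dart
  | Sum.inl (i, l) => Sum.inl (i, n l)
  | Sum.inr x => Sum.inr x

def vertf : Dart → II ⊕ (II × DoorLoc)
  | Sum.inl (i, _) => Sum.inl i
  | Sum.inr x => Sum.inr x

def portf : Dart → DoorLoc
  | Sum.inl (_, l) => l
  | Sum.inr x => x.2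

def extf (u : Fin 3) (a : DoorLoc) : II × DoorLoc := (some a, epp u a)

def encf (u : Fin 3) (s : Bool) : II → Bool := fun i =>
  match i with
  | none => s
  | some _ => tsd u

def reach (dO dT dC : Bool) (x y : Bool × DoorLoc) : Prop :=
  x = y ∨
  (x.2 = DoorLoc.O0 ∧ y = (true, DoorLoc.O1)) ∨
  (dO = false ∧ (x.2 = DoorLoc.O0 ∨ x.2 = DoorLoc.O1) ∧
    (y = (true, DoorLoc.O0) ∨ y = (true, DoorLoc.O1))) ∨
  (x.1 = true ∧ x.2 = DoorLoc.T0 ∧ y = (true, DoorLoc.T1)) ∨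
  (dT = false ∧ x.1 = true ∧ (x.2 = DoorLoc.T0 ∨ x.2 = DoorLoc.T1) ∧
    (y = (true, DoorLoc.T0) ∨ y = (true, DoorLoc.T1))) ∨
  (x.2 = DoorLoc.C0 ∧ y = (false, DoorLoc.C1)) ∨
  (dC = false ∧ (x.2 = DoorLoc.C0 ∨ x.2 = DoorLoc.C1) ∧
    (y = (false, DoorLoc.C0) ∨ y = (false, DoorLoc.C1)))

instance (dO dT dC : Bool) (x y : Bool × DoorLoc) : Decidable (doorTrav dO dT dC x y) := by
  unfold doorTrav; infer_instance

instance (dO dT dC : Bool) (x y : Bool × DoorLoc) : Decidable (reach dO dT dC x y) := by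
  unfold reach; infer_instance

instance (u : Fin 3) (dO dT dC : Bool) : Decidable (uok u dO dT dC) := by
  unfold uok; infer_instance

instance (w : Fin 4) (dO dT dC : Bool) : Decidable (wok w dO dT dC) := by
  unfold wok; infer_instance

lemma diodeA : ∀ (dO dT dC : Bool) (u : Fin 3), uok u dO dT dC →
    doorTrav dO dT dC (tsd u, tdin u) (tsd u, tdout u) := by decide

lemma diodeB : ∀ (dO dT dC : Bool) (u : Fin 3), uok u dO dT dC →
    ∀ y, doorTrav dO dT dC (tsd u, tdin u) y → y = (tsd u, tdout u) := by decide

lemma diodeC : ∀ (dO dT dC : Bool) (u : Fin 3), uok u dO dT dC →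
    ∀ y, ¬ doorTrav dO dT dC (tsd u, tdout u) y := by decide

lemma reach_refl : ∀ dO dT dC x, reach dO dT dC x x := fun _ _ _ _ => Or.inl rfl

lemma reach_closed : ∀ (dO dT dC : Bool) (x y z : Bool × DoorLoc),
    reach dO dT dC x y → doorTrav dO dT dC y z → reach dO dT dC x z := by decide

lemma reach_path : ∀ (dO dT dC : Bool) (x y : Bool × DoorLoc), reach dO dT dC x y →
    x = y ∨ doorTrav dO dT dC x y ∨
    ∃ m, doorTrav dO dT dC x m ∧ doorTrav dO dT dC m y := by decide

lemma reach_transfer : ∀ (dO dT dC : Bool) (w : Fin 4), wok w dO dT dC →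
    ∀ (s s₁ : Bool) (a b : DoorLoc), Ent a = true → Ent b = false →
    (reach dO dT dC (s, alf w a) (s₁, alf w b) ↔ reach true true true (s, a) (s₁, b)) := by decide

lemma reach_ttt_split : ∀ (s s' : Bool) (a b : DoorLoc), reach true true true (s, a) (s', b) →
    (s = s' ∧ a = b) ∨ (Ent a = true ∧ Ent b = false) := by decide

lemma tauf_invol : ∀ (u : Fin 3) (w : Fin 4) (d : Dart), tauf u w (tauf u w d) = d := by decide

lemma tauf_nofix : ∀ (u : Fin 3) (w : Fin 4) (d : Dart), tauf u w d ≠ d := by decide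

lemma tdin_ne_tdout : ∀ u : Fin 3, tdin u ≠ tdout u := by decide

lemma alf_invol : ∀ (w : Fin 4) (l : DoorLoc), alf w (alf w l) = l := by decide

end MD8
namespace MD8

lemma orbCount_eq_card {D L : Type} [Fintype L] (f : D → D) (g : D → L) (reps : L → D)
    (h1 : ∀ d, g (f d) = g d) (h2 : ∀ i, g (reps i) = i)
    (h3 : ∀ d, Relation.EqvGen (fun x y => f x = y) (reps (g d)) d) :
    orbCount f = Fintype.card L := by
  have hresp : ∀ x y, Relation.EqvGen (fun a b => f a = b) x y → g x = g y := by
    intro x y h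
    induction h with
    | rel a b hab => rw [← hab, h1]
    | refl => rfl
    | symm a b _ ih => exact ih.symm
    | trans a b c _ _ ih1 ih2 => exact ih1.trans ih2
  have heq : Quotient (⟨Relation.EqvGen fun x y => f x = y,
      Relation.EqvGen.is_equivalence _⟩ : Setoid D) ≃ L :=
    { toFun := Quotient.lift g hresp
      invFun := fun i => Quotient.mk _ (reps i)
      left_inv := fun q => Quotient.inductionOn q (fun d => Quotient.sound (h3 d))
      right_inv := fun i => h2 i }
  rw [orbCount, Nat.card_congr heq, Nat.card_eq_fintype_card]

lemma orbCount2_eq_card {D L : Type} [Fintype L] (f f' : D → D) (g : D → L) (reps : L → D)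
    (h1 : ∀ d, g (f d) = g d) (h1' : ∀ d, g (f' d) = g d) (h2 : ∀ i, g (reps i) = i)
    (h3 : ∀ d, Relation.EqvGen (fun x y => f x = y ∨ f' x = y) (reps (g d)) d) :
    orbCount2 f f' = Fintype.card L := by
  have hresp : ∀ x y, Relation.EqvGen (fun a b => f a = b ∨ f' a = b) x y → g x = g y := by
    intro x y h
    induction h with
    | rel a b hab => rcases hab with hab | hab <;> rw [← hab] <;> [exact (h1 a).symm; exact (h1' a).symm]
    | refl => rfl
    | symm a b _ ih => exact ih.symm
    | trans a b c _ _ ih1 ih2 => exact ih1.trans ih2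
  have heq : Quotient (⟨Relation.EqvGen fun x y => f x = y ∨ f' x = y,
      Relation.EqvGen.is_equivalence _⟩ : Setoid D) ≃ L :=
    { toFun := Quotient.lift g hresp
      invFun := fun i => Quotient.mk _ (reps i)
      left_inv := fun q => Quotient.inductionOn q (fun d => Quotient.sound (h3 d))
      right_inv := fun i => h2 i }
  rw [orbCount2, Nat.card_congr heq, Nat.card_eq_fintype_card]

lemma eqvGen_iterate {D : Type} {r : D → D → Prop} (f : D → D) (h : ∀ x, r x (f x))
    (x : D) (k : ℕ) : Relation.EqvGen r x (f^[k] x) := by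
  induction k with
  | zero => exact .refl x
  | succ k ih =>
      rw [Function.iterate_succ_apply']
      exact .trans _ _ _ ih (.rel _ _ (h _))

/-- the successor permutation induced by an indexing equiv -/
def nxt (e : Fin 6 ≃ DoorLoc) : DoorLoc → DoorLoc := fun l => e (e.symm l + 1)

lemma nxt_iter (e : Fin 6 ≃ DoorLoc) (k : ℕ) (l : DoorLoc) :
    (nxt e)^[k] l = e (e.symm l + (k : Fin 6)) := by
  induction k with
  | zero => simp
  | succ k ih =>
      rw [Function.iterate_succ_apply', ih, nxt, Equiv.symm_apply_apply]
      congr 1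
      push_cast
      ring

lemma length_eq_six (c : List DoorLoc) (h1 : c.Nodup) (h2 : ∀ l, l ∈ c) : c.length = 6 := by
  have hcard : Fintype.card DoorLoc = 6 := by decide
  have hle : c.length ≤ 6 := hcard ▸ h1.length_le_card
  have : c.toFinset = Finset.univ := Finset.eq_univ_iff_forall.2 (fun l => List.mem_toFinset.2 (h2 l))
  have hge : 6 ≤ c.length := by
    have h := List.toFinset_card_le c
    rwa [this, Finset.card_univ, hcard] at h
  omega

lemma exists_equiv (c : List DoorLoc) (h1 : c.Nodup) (h2 : ∀ l, l ∈ c) :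
    ∃ e : Fin 6 ≃ DoorLoc, (∀ l, cycNext c l = nxt e l) ∧
      (∀ k : Fin 6, ∀ h : (k : ℕ) < c.length, c.get ⟨k, h⟩ = e k) := by
  have hlen : c.length = 6 := length_eq_six c h1 h2
  have hinj : Function.Injective c.get := List.nodup_iff_injective_get.1 h1
  let f : Fin 6 → DoorLoc := fun k => c.get (Fin.cast hlen.symm k)
  have hfinj : Function.Injective f := fun a b h => by
    have := hinj h
    simpa [Fin.ext_iff] using this
  have hbij : Function.Bijective f := by
    rw [Fintype.bijective_iff_injective_and_card]
    exact ⟨hfinj, by decide⟩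
  refine ⟨Equiv.ofBijective f hbij, ?_, ?_⟩
  · intro l
    set e := Equiv.ofBijective f hbij with he
    have hl : l = f (e.symm l) := (e.apply_symm_apply l).symm
    have hidx : List.idxOf l c = ((e.symm l : Fin 6) : ℕ) := by
      conv_lhs => rw [hl]
      exact List.get_idxOf h1 _
    rw [cycNext]
    rw [show (Classical.decEq DoorLoc) = (inferInstance : DecidableEq DoorLoc) from
      Subsingleton.elim _ _, hidx, nxt]
    have hmod : ((e.symm l : ℕ) + 1) % c.length < c.length := Nat.mod_lt _ (by omega)
    rw [List.getD_eq_get (i := ⟨_, hmod⟩)]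
    show c.get _ = e _
    have hcast : (⟨((e.symm l : ℕ) + 1) % c.length, hmod⟩ : Fin c.length) =
        Fin.cast hlen.symm (e.symm l + 1) := by
      rw [Fin.ext_iff]
      simp [Fin.val_add, hlen]
    rw [hcast]
    rfl
  · intro k h
    rfl

end MD8
namespace MD8

/-! ### small computation lemmas -/

lemma Mp_none (u : Fin 3) (w : Fin 4) (q : DoorLoc) :
    Mp u w (none, q) = (some (alf w q), cpp u (alf w q)) := rfl

lemma Mp_cp (u : Fin 3) (w : Fin 4) (p : DoorLoc) :
    Mp u w (some p, cpp u p) = (none, alf w p) := by simp [Mp]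

lemma Mp_other (u : Fin 3) (w : Fin 4) (p l : DoorLoc) (h : l ≠ cpp u p) :
    Mp u w (some p, l) = (some p, l) := by simp [Mp, h]

lemma tauf_inl_none (u : Fin 3) (w : Fin 4) (q : DoorLoc) :
    tauf u w (Sum.inl (none, q)) = Sum.inl (some (alf w q), cpp u (alf w q)) := by
  simp [tauf, Mp_none]

lemma tauf_inl_cp (u : Fin 3) (w : Fin 4) (p : DoorLoc) :
    tauf u w (Sum.inl (some p, cpp u p)) = Sum.inl (none, alf w p) := by
  simp [tauf, Mp_cp]

lemma tauf_inl_other (u : Fin 3) (w : Fin 4) (p l : DoorLoc) (h : l ≠ cpp u p) :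
    tauf u w (Sum.inl (some p, l)) = Sum.inr (some p, l) := by
  simp [tauf, Mp_other u w p l h]

lemma tauf_inr_other (u : Fin 3) (w : Fin 4) (p l : DoorLoc) (h : l ≠ cpp u p) :
    tauf u w (Sum.inr (some p, l)) = Sum.inl (some p, l) := by
  simp [tauf, Mp_other u w p l h]

lemma tauf_inr_none (u : Fin 3) (w : Fin 4) (q : DoorLoc) :
    tauf u w (Sum.inr (none, q)) = Sum.inr (some (alf w q), cpp u (alf w q)) := by
  simp [tauf, Mp_none]

lemma sigf_inl (n : DoorLoc → DoorLoc) (i : II) (l : DoorLoc) :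
    sigf n (Sum.inl (i, l)) = Sum.inl (i, n l) := rfl

lemma sigf_inr (n : DoorLoc → DoorLoc) (x : II × DoorLoc) :
    sigf n (Sum.inr x) = Sum.inr x := rfl

lemma nxt_iter_ne (e : Fin 6 ≃ DoorLoc) (k : ℕ) (hk : (k : Fin 6) ≠ 0) (l : DoorLoc) :
    (nxt e)^[k] l ≠ l := by
  rw [nxt_iter]
  intro h
  have h2 : e.symm l + (k : Fin 6) = e.symm l := by
    have h3 := congrArg e.symm h
    rwa [Equiv.symm_apply_apply] at h3
  exact hk (add_eq_left.mp h2)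

lemma nxt_iter6 (e : Fin 6 ≃ DoorLoc) (l : DoorLoc) : (nxt e)^[6] l = l := by
  rw [nxt_iter]
  have : ((6 : ℕ) : Fin 6) = 0 := rfl
  rw [this, add_zero, Equiv.apply_symm_apply]

/-! ### the permutations -/

def sigPerm (e : Fin 6 ≃ DoorLoc) : Equiv.Perm Dart where
  toFun := sigf (nxt e)
  invFun := sigf (fun l => e (e.symm l - 1))
  left_inv := by
    rintro (⟨i, l⟩ | x) <;> simp [sigf, nxt]
  right_inv := by
    rintro (⟨i, l⟩ | x) <;> simp [sigf, nxt]

def tauPerm (u : Fin 3) (w : Fin 4) : Equiv.Perm Dart :=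
  Function.Involutive.toPerm (tauf u w) (tauf_invol u w)

/-! ### the simulating system -/

def fam8 (dO dT dC : Bool) (c : List DoorLoc) (h1 : c.Nodup) (h2 : ∀ l, l ∈ c) :
    Unit → PGData Bool DoorLoc :=
  fun _ => ⟨doorTrav dO dT dC, c, h1, h2⟩

@[reducible] def sys (dO dT dC : Bool) (c : List DoorLoc) (h1 : c.Nodup) (h2 : ∀ l, l ∈ c)
    (u : Fin 3) (w : Fin 4) (e : Fin 6 ≃ DoorLoc) (he : ∀ l, cycNext c l = nxt e l) :
    MSystem (fam8 dO dT dC c h1 h2) where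
  ι := II
  instFin := inferInstance
  kind := fun _ => ()
  J := II × DoorLoc
  juncFin := inferInstance
  D := Dart
  dartFin := inferInstance
  σ := sigPerm e
  τ := tauPerm u w
  τ_invol := tauf_invol u w
  τ_nofix := tauf_nofix u w
  vert := vertf
  port := portf
  port_unique := by
    intro i l
    refine ⟨Sum.inl (i, l), ⟨rfl, rfl⟩, ?_⟩
    rintro (⟨i', l'⟩ | x) ⟨hv, hp⟩
    · cases hp
      cases hv
      rfl
    · exact absurd hv (by simp [vertf])
  σ_vert := by rintro (⟨i, l⟩ | x) <;> rfl
  σ_port := by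
    rintro (⟨i', l⟩ | x) i hv
    · show nxt e l = cycNext c l
      exact (he l).symm
    · exact absurd hv (by simp [vertf])
  σ_junc := by
    rintro (⟨i', l⟩ | x) d' j hv hv'
    · exact absurd hv (by simp [vertf])
    · rcases d' with y | y
      · exact absurd hv' (by simp [vertf])
      · simp only [vertf, Sum.inr.injEq] at hv hv'
        subst hv; subst hv'
        exact .refl _

lemma sys_sigma (dO dT dC c h1 h2 u w e he) (d : Dart) :
    (sys dO dT dC c h1 h2 u w e he).σ d = sigf (nxt e) d := rfl

lemma sys_tau (dO dT dC c h1 h2 u w e he) (d : Dart) :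
    (sys dO dT dC c h1 h2 u w e he).τ d = tauf u w d := rfl

/-! ### face permutation tour -/

def Ff (u : Fin 3) (w : Fin 4) (e : Fin 6 ≃ DoorLoc) : Dart → Dart :=
  fun d => sigf (nxt e) (tauf u w d)

lemma sys_face (dO dT dC c h1 h2 u w e he) (d : Dart) :
    (sys dO dT dC c h1 h2 u w e he).facePerm d = Ff u w e d := rfl

def tourD (u : Fin 3) (w : Fin 4) (e : Fin 6 ≃ DoorLoc) (q : DoorLoc) (i : ℕ) : Dart :=
  if i = 0 then Sum.inl (none, q)
  else if i = 12 then Sum.inl (none, nxt e q)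
  else if i % 2 = 1 then Sum.inl (some (alf w q), (nxt e)^[(i + 1) / 2] (cpp u (alf w q)))
  else Sum.inr (some (alf w q), (nxt e)^[i / 2] (cpp u (alf w q)))

lemma tour_step (u : Fin 3) (w : Fin 4) (e : Fin 6 ≃ DoorLoc) (q : DoorLoc) :
    ∀ i < 12, Ff u w e (tourD u w e q i) = tourD u w e q (i + 1) := by
  have hodd : ∀ k : ℕ, 1 ≤ k → k ≤ 5 →
      Ff u w e (tourD u w e q (2 * k - 1)) = tourD u w e q (2 * k) := by
    intro k hk1 hk5
    have h1 : tourD u w e q (2 * k - 1) =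
        Sum.inl (some (alf w q), (nxt e)^[k] (cpp u (alf w q))) := by
      have : (2 * k - 1 + 1) / 2 = k := by omega
      rw [tourD, if_neg (by omega), if_neg (by omega), if_pos (by omega), this]
    have h2 : tourD u w e q (2 * k) =
        Sum.inr (some (alf w q), (nxt e)^[k] (cpp u (alf w q))) := by
      have : (2 * k) / 2 = k := by omega
      rw [tourD, if_neg (by omega), if_neg (by omega), if_neg (by omega), this]
    rw [h1, h2, Ff, tauf_inl_other _ _ _ _ (nxt_iter_ne e k (by
      interval_cases k <;> decide) _), sigf_inr]
  have heven : ∀ k : ℕ, 1 ≤ k → k ≤ 5 →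
      Ff u w e (tourD u w e q (2 * k)) = tourD u w e q (2 * k + 1) := by
    intro k hk1 hk5
    have h1 : tourD u w e q (2 * k) =
        Sum.inr (some (alf w q), (nxt e)^[k] (cpp u (alf w q))) := by
      have : (2 * k) / 2 = k := by omega
      rw [tourD, if_neg (by omega), if_neg (by omega), if_neg (by omega), this]
    have h2 : tourD u w e q (2 * k + 1) =
        Sum.inl (some (alf w q), (nxt e)^[k + 1] (cpp u (alf w q))) := by
      have : (2 * k + 1 + 1) / 2 = k + 1 := by omega
      rw [tourD, if_neg (by omega), if_neg (by omega), if_pos (by omega), this]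
    rw [h1, h2, Ff, tauf_inr_other _ _ _ _ (nxt_iter_ne e k (by
      interval_cases k <;> decide) _), sigf_inl,
      ← Function.iterate_succ_apply' (nxt e) k (cpp u (alf w q))]
  have h0 : Ff u w e (tourD u w e q 0) = tourD u w e q 1 := by
    have h1 : tourD u w e q 0 = Sum.inl (none, q) := by rw [tourD, if_pos rfl]
    have h2 : tourD u w e q 1 =
        Sum.inl (some (alf w q), (nxt e)^[1] (cpp u (alf w q))) := by
      rw [tourD, if_neg (by omega), if_neg (by omega), if_pos (by omega)]
    rw [h1, h2, Ff, tauf_inl_none, sigf_inl]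
    rfl
  have h11 : Ff u w e (tourD u w e q 11) = tourD u w e q 12 := by
    have h1 : tourD u w e q 11 = Sum.inl (some (alf w q), cpp u (alf w q)) := by
      rw [tourD, if_neg (by omega), if_neg (by omega), if_pos (by omega),
        show (11 + 1) / 2 = 6 from by norm_num, nxt_iter6]
    have h2 : tourD u w e q 12 = Sum.inl (none, nxt e q) := by
      rw [tourD, if_neg (by omega), if_pos rfl]
    rw [h1, h2, Ff, tauf_inl_cp, alf_invol, sigf_inl]
  intro i hi
  interval_cases i
  · exact h0
  · exact hodd 1 (by omega) (by omega)
  · exact heven 1 (by omega) (by omega)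
  · exact hodd 2 (by omega) (by omega)
  · exact heven 2 (by omega) (by omega)
  · exact hodd 3 (by omega) (by omega)
  · exact heven 3 (by omega) (by omega)
  · exact hodd 4 (by omega) (by omega)
  · exact heven 4 (by omega) (by omega)
  · exact hodd 5 (by omega) (by omega)
  · exact heven 5 (by omega) (by omega)
  · exact h11

lemma tour_iter (u : Fin 3) (w : Fin 4) (e : Fin 6 ≃ DoorLoc) (q : DoorLoc) :
    ∀ i ≤ 12, (Ff u w e)^[i] (Sum.inl (none, q)) = tourD u w e q i := by
  intro i hi
  induction i with
  | zero => rw [tourD]; rfl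
  | succ i ih =>
      rw [Function.iterate_succ_apply', ih (by omega), tour_step u w e q i (by omega)]

lemma tour12 (u : Fin 3) (w : Fin 4) (e : Fin 6 ≃ DoorLoc) (q : DoorLoc) :
    (Ff u w e)^[12] (Sum.inl (none, q)) = Sum.inl (none, nxt e q) := by
  rw [tour_iter u w e q 12 le_rfl, tourD, if_neg (by omega), if_pos rfl]

lemma tour12m (u : Fin 3) (w : Fin 4) (e : Fin 6 ≃ DoorLoc) (q : DoorLoc) (m : ℕ) :
    (Ff u w e)^[12 * m] (Sum.inl (none, q)) = Sum.inl (none, (nxt e)^[m] q) := by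
  induction m generalizing q with
  | zero => rfl
  | succ m ih =>
      have : 12 * (m + 1) = 12 + 12 * m := by ring
      rw [this, Function.iterate_add_apply, ih, tour12,
        ← Function.iterate_succ_apply' (nxt e) m q]

end MD8
namespace MD8

def g1 : Dart → II ⊕ (II × DoorLoc)
  | Sum.inl (i, _) => Sum.inl i
  | Sum.inr x => Sum.inr x

def reps1 (e : Fin 6 ≃ DoorLoc) : II ⊕ (II × DoorLoc) → Dart
  | Sum.inl i => Sum.inl (i, e 0)
  | Sum.inr x => Sum.inr x

def g2 (u : Fin 3) (w : Fin 4) : Dart → II × DoorLoc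
  | Sum.inl x => if Mp u w x = x then x else (if x.1 = none then x else Mp u w x)
  | Sum.inr x => if Mp u w x = x then x else (if x.1 = none then Mp u w x else x)

def reps2 (u : Fin 3) (w : Fin 4) (x : II × DoorLoc) : Dart :=
  if Mp u w x = x then Sum.inl x else (if x.1 = none then Sum.inl x else Sum.inr x)

def tag (w : Fin 4) : II × DoorLoc → DoorLoc
  | (none, q) => q
  | (some p, _) => alf w p

def g3 (u : Fin 3) (w : Fin 4) : Dart → Option DoorLoc
  | Sum.inl _ => none
  | Sum.inr x => if Mp u w x = x then none else some (tag w x)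

def reps3 (e : Fin 6 ≃ DoorLoc) : Option DoorLoc → Dart
  | none => Sum.inl (none, e 0)
  | some q => Sum.inr (none, q)

lemma g2_tau : ∀ (u : Fin 3) (w : Fin 4) (d : Dart), g2 u w (tauf u w d) = g2 u w d := by decide

lemma g2_reps : ∀ (u : Fin 3) (w : Fin 4) (x : II × DoorLoc), g2 u w (reps2 u w x) = x := by decide

lemma reps2_reach : ∀ (u : Fin 3) (w : Fin 4) (d : Dart),
    reps2 u w (g2 u w d) = d ∨ tauf u w (reps2 u w (g2 u w d)) = d := by decide

lemma g3_tau : ∀ (u : Fin 3) (w : Fin 4) (d : Dart), g3 u w (tauf u w d) = g3 u w d := by decide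

lemma g3_reps : ∀ (u : Fin 3) (w : Fin 4) (e : Fin 6 ≃ DoorLoc) (o : Option DoorLoc),
    g3 u w (reps3 e o) = o := by
  intro u w e o
  cases o with
  | none => rfl
  | some q =>
      show g3 u w (Sum.inr (none, q)) = some q
      have : ∀ (u : Fin 3) (w : Fin 4) (q : DoorLoc),
          g3 u w (Sum.inr (none, q)) = some q := by decide
      exact this u w q

lemma g1_sig (e : Fin 6 ≃ DoorLoc) (d : Dart) : g1 (sigf (nxt e) d) = g1 d := by
  rcases d with ⟨i, l⟩ | x <;> rfl

lemma g3_sig (u : Fin 3) (w : Fin 4) (e : Fin 6 ≃ DoorLoc) (d : Dart) :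
    g3 u w (sigf (nxt e) d) = g3 u w d := by
  rcases d with ⟨i, l⟩ | x <;> rfl

lemma sigf_iter (n : DoorLoc → DoorLoc) (i : II) (l : DoorLoc) (k : ℕ) :
    (sigf n)^[k] (Sum.inl (i, l)) = Sum.inl (i, n^[k] l) := by
  induction k generalizing l with
  | zero => rfl
  | succ k ih => rw [Function.iterate_succ_apply, Function.iterate_succ_apply, sigf_inl, ih]

lemma Mp_none_ne : ∀ (u : Fin 3) (w : Fin 4) (q : DoorLoc), Mp u w (none, q) ≠ (none, q) := by
  decide

lemma Mp_fix_iff : ∀ (u : Fin 3) (w : Fin 4) (p l : DoorLoc),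
    Mp u w (some p, l) = (some p, l) ↔ l ≠ cpp u p := by decide

/-- connectivity of the main face -/
lemma face_conn (u : Fin 3) (w : Fin 4) (e : Fin 6 ≃ DoorLoc) :
    ∀ d : Dart, g3 u w d = none →
    Relation.EqvGen (fun x y => Ff u w e x = y) (Sum.inl (none, e 0)) d := by
  have hstep : ∀ x : Dart, (fun x y => Ff u w e x = y) x (Ff u w e x) := fun _ => rfl
  have hcen : ∀ q : DoorLoc, Relation.EqvGen (fun x y => Ff u w e x = y)
      (Sum.inl (none, e 0)) (Sum.inl (none, q)) := by
    intro q
    have h := eqvGen_iterate (Ff u w e) hstep (Sum.inl (none, e 0)) (12 * (e.symm q : ℕ))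
    rwa [tour12m, nxt_iter, Equiv.symm_apply_apply, Fin.cast_val_eq_self, zero_add,
      Equiv.apply_symm_apply] at h
  have hdio : ∀ q : DoorLoc, ∀ i ≤ 12, Relation.EqvGen (fun x y => Ff u w e x = y)
      (Sum.inl (none, e 0)) (tourD u w e q i) := by
    intro q i hi
    refine .trans _ _ _ (hcen q) ?_
    have h := eqvGen_iterate (Ff u w e) hstep (Sum.inl (none, q)) i
    rwa [tour_iter u w e q i hi] at h
  have key : ∀ (p l : DoorLoc), ∀ isA : Bool, (isA = false → l ≠ cpp u p) →
      Relation.EqvGen (fun x y => Ff u w e x = y) (Sum.inl (none, e 0))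
        (if isA then Sum.inl (some p, l) else Sum.inr (some p, l)) := by
    intro p l isA hne
    set q := alf w p with hq
    have hpq : alf w q = p := alf_invol w p
    set k : ℕ := ((e.symm l - e.symm (cpp u p) : Fin 6) : ℕ) with hk
    have hcast : ((k : ℕ) : Fin 6) = e.symm l - e.symm (cpp u p) := by
      rw [hk, Fin.cast_val_eq_self]
    have hiter : (nxt e)^[k] (cpp u p) = l := by
      rw [nxt_iter, hcast]
      have : e.symm (cpp u p) + (e.symm l - e.symm (cpp u p)) = e.symm l := by ring
      rw [this, Equiv.apply_symm_apply]
    have hk5 : k ≤ 5 := by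
      have := (e.symm l - e.symm (cpp u p)).isLt
      omega
    by_cases hk0 : k = 0
    · -- l = cpp u p ; must be the A-dart; it is tourD q 11
      have hl : l = cpp u p := by
        rw [← hiter, hk0]
        rfl
      have hA : isA = true := by
        cases isA with
        | false => exact absurd hl (hne rfl)
        | true => rfl
      have h11 : tourD u w e q 11 = Sum.inl (some p, l) := by
        rw [tourD, if_neg (by omega), if_neg (by omega), if_pos (by omega),
          show (11 + 1) / 2 = 6 from by norm_num, nxt_iter6, hpq, hl]
      rw [hA, if_pos rfl, ← h11]
      exact hdio q 11 (by omega)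
    · cases isA with
      | true =>
          have ht : tourD u w e q (2 * k - 1) = Sum.inl (some p, l) := by
            rw [tourD, if_neg (by omega), if_neg (by omega), if_pos (by omega),
              show (2 * k - 1 + 1) / 2 = k from by omega, hpq, hiter]
          rw [if_pos rfl, ← ht]
          exact hdio q (2 * k - 1) (by omega)
      | false =>
          have ht : tourD u w e q (2 * k) = Sum.inr (some p, l) := by
            rw [tourD, if_neg (by omega), if_neg (by omega), if_neg (by omega),
              show (2 * k) / 2 = k from by omega, hpq, hiter]
          rw [if_neg (by simp), ← ht]
          exact hdio q (2 * k) (by omega)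
  rintro (⟨i, l⟩ | ⟨i, l⟩) hg
  · rcases i with _ | p
    · exact hcen l
    · have := key p l true (by simp)
      simpa using this
  · rcases i with _ | p
    · exact absurd hg (by
        show g3 u w (Sum.inr (none, l)) ≠ none
        simp [g3, Mp_none_ne u w l])
    · have hne : l ≠ cpp u p := by
        by_contra hcc
        have : Mp u w (some p, l) ≠ (some p, l) := by
          rw [hcc, Mp_cp]
          simp
        rw [g3, if_neg this] at hg
        exact Option.some_ne_none _ hg
      have := key p l false (fun _ => hne)
      simpa using this

lemma face_reps (u : Fin 3) (w : Fin 4) (e : Fin 6 ≃ DoorLoc) :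
    ∀ d : Dart, Relation.EqvGen (fun x y => Ff u w e x = y) (reps3 e (g3 u w d)) d := by
  intro d
  rcases hg : g3 u w d with _ | t
  · exact face_conn u w e d hg
  · rcases d with x | ⟨i, l⟩
    · exact absurd hg (by simp [g3])
    · rcases i with _ | p
      · -- d = inr (none, q), tag = q
        have : t = l := by
          have h5 : g3 u w (Sum.inr ((none : II), l)) = some l := by
            have : ∀ (u : Fin 3) (w : Fin 4) (q : DoorLoc),
                g3 u w (Sum.inr ((none : II), q)) = some q := by decide
            exact this u w l
          rw [hg] at h5
          exact Option.some_injective _ h5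
        subst this
        exact .refl _
      · -- d = inr (some p, cpp u p), tag = alf w p
        have hfix : Mp u w ((some p : II), l) ≠ ((some p : II), l) := by
          intro hcc
          rw [g3, if_pos hcc] at hg
          exact absurd hg (by simp)
        have hl : l = cpp u p := by
          by_contra hcc
          exact hfix ((Mp_fix_iff u w p l).2 hcc)
        have ht : t = alf w p := by
          rw [g3, if_neg hfix] at hg
          exact (Option.some.injEq _ _ ▸ hg).symm
        subst ht; subst hl
        show Relation.EqvGen _ (Sum.inr ((none : II), alf w p)) _
        refine .rel _ _ ?_
        show sigf (nxt e) (tauf u w (Sum.inr (none, alf w p))) = _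
        rw [tauf_inr_none, alf_invol, sigf_inr]

lemma eqvGen_F_sub (u : Fin 3) (w : Fin 4) (e : Fin 6 ≃ DoorLoc) {x y : Dart}
    (h : Relation.EqvGen (fun a b => Ff u w e a = b) x y) :
    Relation.EqvGen (fun a b => sigf (nxt e) a = b ∨ tauf u w a = b) x y := by
  induction h with
  | rel a b hab => exact .trans _ _ _ (.rel _ _ (Or.inr rfl)) (.rel _ _ (Or.inl hab))
  | refl a => exact .refl a
  | symm a b _ ih => exact ih.symm _ _
  | trans a b c _ _ ih1 ih2 => exact ih1.trans _ _ _ ih2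

lemma sig_reps (u : Fin 3) (w : Fin 4) (e : Fin 6 ≃ DoorLoc) :
    ∀ d : Dart, Relation.EqvGen (fun x y => sigf (nxt e) x = y) (reps1 e (g1 d)) d := by
  rintro (⟨i, l⟩ | x)
  · show Relation.EqvGen _ (Sum.inl (i, e 0)) _
    have h := eqvGen_iterate (sigf (nxt e)) (fun _ => rfl) (Sum.inl (i, e 0)) ((e.symm l : Fin 6) : ℕ)
    rwa [sigf_iter, nxt_iter, Equiv.symm_apply_apply, Fin.cast_val_eq_self, zero_add,
      Equiv.apply_symm_apply] at h
  · exact .refl _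

lemma tau_reps (u : Fin 3) (w : Fin 4) :
    ∀ d : Dart, Relation.EqvGen (fun x y => tauf u w x = y) (reps2 u w (g2 u w d)) d := by
  intro d
  rcases reps2_reach u w d with h | h
  · rw [h]; exact .refl _
  · exact .rel _ _ h

lemma sys_planar (dO dT dC : Bool) (c : List DoorLoc) (h1 : c.Nodup) (h2 : ∀ l, l ∈ c)
    (u : Fin 3) (w : Fin 4) (e : Fin 6 ≃ DoorLoc) (he : ∀ l, cycNext c l = nxt e l) :
    (sys dO dT dC c h1 h2 u w e he).IsPlanar := by
  show orbCount (fun d : Dart => sigf (nxt e) d) + orbCount (fun d : Dart => Ff u w e d) =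
    orbCount (fun d : Dart => tauf u w d) +
      2 * orbCount2 (fun d : Dart => sigf (nxt e) d) (fun d : Dart => tauf u w d)
  rw [orbCount_eq_card _ g1 (reps1 e) (g1_sig e) (by rintro (i | x) <;> rfl) (sig_reps u w e),
    orbCount_eq_card (fun d : Dart => Ff u w e d) (g3 u w) (reps3 e)
      (fun d => (g3_sig u w e (tauf u w d)).trans (g3_tau u w d) :
        ∀ d : Dart, g3 u w (Ff u w e d) = g3 u w d) (g3_reps u w e)
      (face_reps u w e),
    orbCount_eq_card _ (g2 u w) (reps2 u w) (g2_tau u w) (g2_reps u w) (tau_reps u w),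
    orbCount2_eq_card _ _ (g3 u w) (reps3 e) (g3_sig u w e) (g3_tau u w) (g3_reps u w e)
      (fun d => eqvGen_F_sub u w e (face_reps u w e d))]
  decide

end MD8
namespace MD8

lemma ent_epp : ∀ (u : Fin 3) (p : DoorLoc), Ent p = true → epp u p = tdin u := by decide
lemma notent_epp : ∀ (u : Fin 3) (p : DoorLoc), Ent p = false → epp u p = tdout u := by decide
lemma ent_cpp : ∀ (u : Fin 3) (p : DoorLoc), Ent p = true → cpp u p = tdout u := by decide
lemma notent_cpp : ∀ (u : Fin 3) (p : DoorLoc), Ent p = false → cpp u p = tdin u := by decide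
lemma epp_ne_cpp : ∀ (u : Fin 3) (p : DoorLoc), epp u p ≠ cpp u p := by decide

lemma encf_inj (u : Fin 3) {s s' : Bool} (h : encf u s = encf u s') : s = s' :=
  congrFun h none

lemma updState_eq_self {σg : II → Bool} {i : II} {v : Bool} (h : σg i = v) :
    updState σg i v = σg := by
  funext j
  rw [updState]
  split
  · next hj => rw [hj, h]
  · rfl

lemma updState_center (u : Fin 3) (s s' : Bool) :
    updState (encf u s) none s' = encf u s' := by
  funext j
  rw [updState]
  split
  · next hj => rw [hj]; rfl
  · next hj => cases j with
      | none => exact absurd rfl hj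
      | some p => rfl

section Sim

variable (dO dT dC : Bool) (c : List DoorLoc) (h1 : c.Nodup) (h2 : ∀ l, l ∈ c)
  (u : Fin 3) (w : Fin 4) (e : Fin 6 ≃ DoorLoc) (he : ∀ l, cycNext c l = nxt e l)

local notation "S8" => sys dO dT dC c h1 h2 u w e he

def Inv (s : Bool) (a : DoorLoc) :
    ((II → Bool) × ((II × DoorLoc) ⊕ (II × DoorLoc))) → Prop := fun cfg =>
  (cfg.1 = encf u s ∧ (cfg.2 = Sum.inl (some a, epp u a) ∨ cfg.2 = Sum.inr (some a, epp u a))) ∨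
  (Ent a = true ∧ cfg.1 = encf u s ∧ cfg.2 = Sum.inl (some a, tdout u)) ∨
  (Ent a = true ∧ ∃ s₁ q, Relation.ReflTransGen (doorTrav dO dT dC) (s, alf w a) (s₁, q) ∧
      cfg.1 = encf u s₁ ∧ cfg.2 = Sum.inl (none, q)) ∨
  (Ent a = true ∧ ∃ s₁ q, Relation.ReflTransGen (doorTrav dO dT dC) (s, alf w a) (s₁, q) ∧
      cfg.1 = encf u s₁ ∧ cfg.2 = Sum.inl (some (alf w q), cpp u (alf w q))) ∨
  (Ent a = true ∧ ∃ s₁ b, Relation.ReflTransGen (doorTrav dO dT dC) (s, alf w a) (s₁, alf w b) ∧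
      Ent b = false ∧ cfg.1 = encf u s₁ ∧
      (cfg.2 = Sum.inl (some b, tdout u) ∨ cfg.2 = Sum.inr (some b, tdout u)))

lemma endpt_inl (x : II × DoorLoc) : (S8).endpt (Sum.inl x) = Sum.inl x := rfl
lemma endpt_inr (x : II × DoorLoc) : (S8).endpt (Sum.inr x) = Sum.inr x := rfl

lemma endpt_cases (d : Dart) :
    (∃ x, d = Sum.inl x ∧ (S8).endpt d = Sum.inl x) ∨
    (∃ x, d = Sum.inr x ∧ (S8).endpt d = Sum.inr x) := by
  rcases d with x | x
  · exact Or.inl ⟨x, rfl, rfl⟩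
  · exact Or.inr ⟨x, rfl, rfl⟩

lemma inv_step (hu : uok u dO dT dC) (s : Bool) (a : DoorLoc)
    {x y : (II → Bool) × ((II × DoorLoc) ⊕ (II × DoorLoc))}
    (hstep : MStep (fam8 dO dT dC c h1 h2) S8 x y) (hx : Inv dO dT dC u w s a x) :
    Inv dO dT dC u w s a y := by
  rcases hstep with @⟨σg, i, a₀, b₀, s', ht⟩ | @⟨σg, d⟩
  ·
      rcases hx with ⟨hst, hpos | hpos⟩ | ⟨ha, hst, hpos⟩ | ⟨ha, s₁, q, hcc, hst, hpos⟩ |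
        ⟨ha, s₁, q, hcc, hst, hpos⟩ | ⟨ha, s₁, b, hcc, hb, hst, hpos⟩
      · -- at entry port of diode a
        simp only [Sum.inl.injEq, Prod.mk.injEq] at hpos
        obtain ⟨hi, ha₀⟩ := hpos
        subst hi; subst ha₀; subst hst
        cases hEnt : Ent a with
        | true =>
            rw [ent_epp u a hEnt] at ht
            have hB := diodeB dO dT dC u hu _ ht
            rw [show (encf u s) (some a) = tsd u from rfl] at *
            cases hB
            refine Or.inr (Or.inl ⟨hEnt, ?_, rfl⟩)
            exact updState_eq_self rfl
        | false =>
            rw [notent_epp u a hEnt] at ht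
            exact absurd ht (by
              rw [show (encf u s) (some a) = tsd u from rfl]
              exact diodeC dO dT dC u hu _)
      · exact absurd hpos (by simp)
      · -- at inner port of entrance diode a : dead end
        simp only [Sum.inl.injEq, Prod.mk.injEq] at hpos
        obtain ⟨hi, ha₀⟩ := hpos
        subst hi; subst ha₀; subst hst
        exact absurd ht (by
          rw [show (encf u s) (some a) = tsd u from rfl]
          exact diodeC dO dT dC u hu _)
      · -- at the central door
        simp only [Sum.inl.injEq, Prod.mk.injEq] at hpos
        obtain ⟨hi, ha₀⟩ := hpos
        subst hi; subst ha₀; subst hst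
        rw [show (encf u s₁) none = s₁ from rfl] at ht
        refine Or.inr (Or.inr (Or.inl ⟨ha, s', b₀, hcc.tail ht, ?_, rfl⟩))
        exact updState_center u s₁ s'
      · -- at the inner port of the diode attached at q
        simp only [Sum.inl.injEq, Prod.mk.injEq] at hpos
        obtain ⟨hi, ha₀⟩ := hpos
        subst hi; subst ha₀; subst hst
        rw [show (encf u s₁) (some (alf w q)) = tsd u from rfl] at ht
        cases hEnt : Ent (alf w q) with
        | true =>
            rw [ent_cpp u _ hEnt] at ht
            exact absurd ht (diodeC dO dT dC u hu _)
        | false =>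
            rw [notent_cpp u _ hEnt] at ht
            have hB := diodeB dO dT dC u hu _ ht
            cases hB
            refine Or.inr (Or.inr (Or.inr (Or.inr ⟨ha, s₁, alf w q, ?_, hEnt, ?_, Or.inl rfl⟩)))
            · rwa [alf_invol]
            · exact updState_eq_self rfl
      · -- at the outer port of exit diode b
        rcases hpos with hpos | hpos
        · simp only [Sum.inl.injEq, Prod.mk.injEq] at hpos
          obtain ⟨hi, ha₀⟩ := hpos
          subst hi; subst ha₀; subst hst
          rw [show (encf u s₁) (some b) = tsd u from rfl] at ht
          exact absurd ht (diodeC dO dT dC u hu _)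
        · exact absurd hpos (by simp)
  ·
      rcases endpt_cases dO dT dC c h1 h2 u w e he d with ⟨z, hd, hz⟩ | ⟨z, hd, hz⟩
      · subst hd
        rcases hx with ⟨hst, hpos | hpos⟩ | ⟨ha, hst, hpos⟩ | ⟨ha, s₁, q, hcc, hst, hpos⟩ |
          ⟨ha, s₁, q, hcc, hst, hpos⟩ | ⟨ha, s₁, b, hcc, hb, hst, hpos⟩
        · rw [hz] at hpos
          simp only [Sum.inl.injEq] at hpos
          subst hpos
          have : (S8).τ (Sum.inl (some a, epp u a)) = Sum.inr (some a, epp u a) :=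
            tauf_inl_other u w _ _ (epp_ne_cpp u a)
          rw [this, endpt_inr]
          exact Or.inl ⟨hst, Or.inr rfl⟩
        · rw [hz] at hpos
          exact absurd hpos (by simp)
        · rw [hz] at hpos
          simp only [Sum.inl.injEq] at hpos
          subst hpos
          have : (S8).τ (Sum.inl (some a, tdout u)) = Sum.inl (none, alf w a) := by
            rw [show (S8).τ (Sum.inl ((some a : II), tdout u)) =
              tauf u w (Sum.inl ((some a : II), tdout u)) from rfl,
              show tdout u = cpp u a from (ent_cpp u a ha).symm, tauf_inl_cp]
          rw [this, endpt_inl]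
          exact Or.inr (Or.inr (Or.inl ⟨ha, s, alf w a, .refl, hst, rfl⟩))
        · rw [hz] at hpos
          simp only [Sum.inl.injEq] at hpos
          subst hpos
          have : (S8).τ (Sum.inl ((none : II), q)) =
              Sum.inl (some (alf w q), cpp u (alf w q)) := tauf_inl_none u w q
          rw [this, endpt_inl]
          exact Or.inr (Or.inr (Or.inr (Or.inl ⟨ha, s₁, q, hcc, hst, rfl⟩)))
        · rw [hz] at hpos
          simp only [Sum.inl.injEq] at hpos
          subst hpos
          have : (S8).τ (Sum.inl (some (alf w q), cpp u (alf w q))) =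
              Sum.inl ((none : II), q) := by
            rw [show (S8).τ (Sum.inl ((some (alf w q) : II), cpp u (alf w q))) =
              tauf u w (Sum.inl ((some (alf w q) : II), cpp u (alf w q))) from rfl,
              tauf_inl_cp, alf_invol]
          rw [this, endpt_inl]
          exact Or.inr (Or.inr (Or.inl ⟨ha, s₁, q, hcc, hst, rfl⟩))
        · rcases hpos with hpos | hpos
          · rw [hz] at hpos
            simp only [Sum.inl.injEq] at hpos
            subst hpos
            have : (S8).τ (Sum.inl (some b, tdout u)) = Sum.inr (some b, tdout u) := by
              refine tauf_inl_other u w _ _ ?_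
              rw [notent_cpp u b hb]
              exact tdin_ne_tdout u ∘ Eq.symm
            rw [this, endpt_inr]
            exact Or.inr (Or.inr (Or.inr (Or.inr ⟨ha, s₁, b, hcc, hb, hst, Or.inr rfl⟩)))
          · rw [hz] at hpos
            exact absurd hpos (by simp)
      · subst hd
        rcases hx with ⟨hst, hpos | hpos⟩ | ⟨ha, hst, hpos⟩ | ⟨ha, s₁, q, hcc, hst, hpos⟩ |
          ⟨ha, s₁, q, hcc, hst, hpos⟩ | ⟨ha, s₁, b, hcc, hb, hst, hpos⟩
        · rw [hz] at hpos
          exact absurd hpos (by simp)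
        · rw [hz] at hpos
          simp only [Sum.inr.injEq] at hpos
          subst hpos
          have : (S8).τ (Sum.inr (some a, epp u a)) = Sum.inl (some a, epp u a) :=
            tauf_inr_other u w _ _ (epp_ne_cpp u a)
          rw [this, endpt_inl]
          exact Or.inl ⟨hst, Or.inl rfl⟩
        · rw [hz] at hpos
          exact absurd hpos (by simp)
        · rw [hz] at hpos
          exact absurd hpos (by simp)
        · rw [hz] at hpos
          exact absurd hpos (by simp)
        · rcases hpos with hpos | hpos
          · rw [hz] at hpos
            exact absurd hpos (by simp)
          · rw [hz] at hpos
            simp only [Sum.inr.injEq] at hpos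
            subst hpos
            have : (S8).τ (Sum.inr (some b, tdout u)) = Sum.inl (some b, tdout u) := by
              refine tauf_inr_other u w _ _ ?_
              rw [notent_cpp u b hb]
              exact tdin_ne_tdout u ∘ Eq.symm
            rw [this, endpt_inl]
            exact Or.inr (Or.inr (Or.inr (Or.inr ⟨ha, s₁, b, hcc, hb, hst, Or.inl rfl⟩)))

end Sim

end MD8
namespace MD8

lemma rtg_iff_reach (dO dT dC : Bool) (x y : Bool × DoorLoc) :
    Relation.ReflTransGen (doorTrav dO dT dC) x y ↔ reach dO dT dC x y := by
  constructor
  · intro h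
    induction h with
    | refl => exact reach_refl dO dT dC x
    | tail _ hstep ih => exact reach_closed dO dT dC _ _ _ ih hstep
  · intro h
    rcases reach_path dO dT dC x y h with h | h | ⟨m, hm1, hm2⟩
    · rw [h]
    · exact .single h
    · exact .head hm1 (.single hm2)

lemma inv_extract (dO dT dC : Bool) (u : Fin 3) (w : Fin 4) (hw : wok w dO dT dC)
    (s s' : Bool) (a b : DoorLoc)
    (h : Inv dO dT dC u w s a (encf u s', Sum.inl (extf u b))) :
    Relation.ReflTransGen (doorTrav true true true) (s, a) (s', b) := by
  rcases h with ⟨hst, hpos | hpos⟩ | ⟨ha, hst, hpos⟩ | ⟨ha, s₁, q, hcc, hst, hpos⟩ |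
    ⟨ha, s₁, q, hcc, hst, hpos⟩ | ⟨ha, s₁, b', hcc, hb, hst, hpos⟩
  · simp only [extf, Sum.inl.injEq, Prod.mk.injEq, Option.some.injEq] at hpos
    obtain ⟨hba, -⟩ := hpos
    subst hba
    rw [encf_inj u hst]
  · exact absurd hpos (by simp [extf])
  · simp only [extf, Sum.inl.injEq, Prod.mk.injEq, Option.some.injEq] at hpos
    obtain ⟨hba, hpp⟩ := hpos
    rw [hba, ent_epp u a ha] at hpp
    exact absurd hpp (tdin_ne_tdout u)
  · exact absurd hpos (by simp [extf])
  · simp only [extf, Sum.inl.injEq, Prod.mk.injEq, Option.some.injEq] at hpos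
    obtain ⟨hba, hpp⟩ := hpos
    rw [← hba] at hpp
    exact absurd hpp (epp_ne_cpp u b)
  · rcases hpos with hpos | hpos
    · simp only [extf, Sum.inl.injEq, Prod.mk.injEq, Option.some.injEq] at hpos
      obtain ⟨hbb, -⟩ := hpos
      rw [← hbb] at hcc hb
      have hs : s₁ = s' := encf_inj u hst.symm
      subst hs
      have hre : reach dO dT dC (s, alf w a) (s₁, alf w b) :=
        (rtg_iff_reach dO dT dC _ _).1 hcc
      have hires := (reach_transfer dO dT dC w hw s s₁ a b ha hb).1 hre
      exact (rtg_iff_reach true true true _ _).2 hires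
    · exact absurd hpos (by simp [extf])

section Sim2

variable (dO dT dC : Bool) (c : List DoorLoc) (h1 : c.Nodup) (h2 : ∀ l, l ∈ c)
  (u : Fin 3) (w : Fin 4) (e : Fin 6 ≃ DoorLoc) (he : ∀ l, cycNext c l = nxt e l)

local notation "S8" => sys dO dT dC c h1 h2 u w e he

lemma inv_reach (hu : uok u dO dT dC) (s : Bool) (a : DoorLoc)
    {cfg : (II → Bool) × ((II × DoorLoc) ⊕ (II × DoorLoc))}
    (h : Relation.ReflTransGen (MStep (fam8 dO dT dC c h1 h2) S8)
      (encf u s, Sum.inl (extf u a)) cfg) :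
    Inv dO dT dC u w s a cfg := by
  induction h with
  | refl => exact Or.inl ⟨rfl, Or.inl rfl⟩
  | tail _ hstep ih => exact inv_step dO dT dC c h1 h2 u w e he hu s a hstep ih

lemma lift_center (x y : Bool × DoorLoc)
    (h : Relation.ReflTransGen (doorTrav dO dT dC) x y) :
    Relation.ReflTransGen (MStep (fam8 dO dT dC c h1 h2) S8)
      (encf u x.1, Sum.inl ((none : II), x.2)) (encf u y.1, Sum.inl ((none : II), y.2)) := by
  induction h with
  | refl => exact .refl
  | @tail p p' _ hstep ih =>
      obtain ⟨sm, qm⟩ := p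
      obtain ⟨sm', qm'⟩ := p'
      have hstep' := MStep.trav (fam := fam8 dO dT dC c h1 h2) (S := S8)
        (σg := encf u sm) (i := none) (a := qm) (b := qm') (s' := sm')
        (by exact hstep)
      erw [updState_center] at hstep'
      exact ih.tail hstep'

lemma forward_path (hu : uok u dO dT dC) (hw : wok w dO dT dC) (s s' : Bool) (a b : DoorLoc)
    (h : Relation.ReflTransGen (doorTrav true true true) (s, a) (s', b)) :
    Relation.ReflTransGen (MStep (fam8 dO dT dC c h1 h2) S8)
      (encf u s, Sum.inl (extf u a)) (encf u s', Sum.inl (extf u b)) := by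
  have hre := (rtg_iff_reach true true true _ _).1 h
  rcases reach_ttt_split s s' a b hre with ⟨hs, hab⟩ | ⟨ha, hb⟩
  · subst hs; subst hab; exact .refl
  · -- step 1 : through the entrance diode
    have st1 : MStep (fam8 dO dT dC c h1 h2) S8
        (encf u s, Sum.inl (extf u a)) (encf u s, Sum.inl (some a, tdout u)) := by
      have h0 := MStep.trav (fam := fam8 dO dT dC c h1 h2) (S := S8)
        (σg := encf u s) (i := some a) (a := tdin u) (b := tdout u) (s' := tsd u)
        (by exact diodeA dO dT dC u hu)
      erw [updState_eq_self (show encf u s (some a) = tsd u from rfl)] at h0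
      rw [extf, ent_epp u a ha]
      exact h0
    -- step 2 : wire to the central door
    have st2 : MStep (fam8 dO dT dC c h1 h2) S8
        (encf u s, Sum.inl (some a, tdout u)) (encf u s, Sum.inl ((none : II), alf w a)) := by
      have h0 := MStep.wire (fam := fam8 dO dT dC c h1 h2) (S := S8)
        (σg := encf u s) (Sum.inl ((some a : II), tdout u))
      rw [endpt_inl] at h0
      have ht : (S8).τ (Sum.inl ((some a : II), tdout u)) = Sum.inl ((none : II), alf w a) := by
        rw [show (S8).τ (Sum.inl ((some a : II), tdout u)) =
          tauf u w (Sum.inl ((some a : II), tdout u)) from rfl,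
          show tdout u = cpp u a from (ent_cpp u a ha).symm, tauf_inl_cp]
      rw [ht, endpt_inl] at h0
      exact h0
    -- step 3 : across the central door
    have st3 := lift_center dO dT dC c h1 h2 u w e he (s, alf w a) (s', alf w b)
      ((rtg_iff_reach dO dT dC _ _).2 ((reach_transfer dO dT dC w hw s s' a b ha hb).2 hre))
    -- step 4 : wire to the exit diode
    have st4 : MStep (fam8 dO dT dC c h1 h2) S8
        (encf u s', Sum.inl ((none : II), alf w b)) (encf u s', Sum.inl (some b, tdin u)) := by
      have h0 := MStep.wire (fam := fam8 dO dT dC c h1 h2) (S := S8)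
        (σg := encf u s') (Sum.inl ((none : II), alf w b))
      rw [endpt_inl] at h0
      have ht : (S8).τ (Sum.inl ((none : II), alf w b)) = Sum.inl ((some b : II), tdin u) := by
        rw [show (S8).τ (Sum.inl ((none : II), alf w b)) =
          tauf u w (Sum.inl ((none : II), alf w b)) from rfl, tauf_inl_none, alf_invol,
          notent_cpp u b hb]
      rw [ht, endpt_inl] at h0
      exact h0
    -- step 5 : through the exit diode
    have st5 : MStep (fam8 dO dT dC c h1 h2) S8
        (encf u s', Sum.inl (some b, tdin u)) (encf u s', Sum.inl (extf u b)) := by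
      have h0 := MStep.trav (fam := fam8 dO dT dC c h1 h2) (S := S8)
        (σg := encf u s') (i := some b) (a := tdin u) (b := tdout u) (s' := tsd u)
        (by exact diodeA dO dT dC u hu)
      erw [updState_eq_self (show encf u s' (some b) = tsd u from rfl)] at h0
      rw [extf, notent_epp u b hb]
      exact h0
    exact ((((Relation.ReflTransGen.refl.tail st1).tail st2).trans st3).tail st4).tail st5

lemma sim_iff (hu : uok u dO dT dC) (hw : wok w dO dT dC) (s s' : Bool) (a b : DoorLoc) :
    Relation.ReflTransGen (MStep (fam8 dO dT dC c h1 h2) S8)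
      (encf u s, Sum.inl (extf u a)) (encf u s', Sum.inl (extf u b)) ↔
    Relation.ReflTransGen (doorTrav true true true) (s, a) (s', b) := by
  constructor
  · intro h
    exact inv_extract dO dT dC u w hw s s' a b
      (inv_reach dO dT dC c h1 h2 u w e he hu s a h)
  · exact forward_path dO dT dC c h1 h2 u w e he hu hw s s' a b

end Sim2

end MD8
namespace MD8

section Face

variable (dO dT dC : Bool) (c : List DoorLoc) (h1 : c.Nodup) (h2 : ∀ l, l ∈ c)
  (u : Fin 3) (w : Fin 4) (e : Fin 6 ≃ DoorLoc) (he : ∀ l, cycNext c l = nxt e l)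

local notation "S8" => sys dO dT dC c h1 h2 u w e he

lemma isDartAt_iff (x : II × DoorLoc) (d : Dart) :
    (S8).IsDartAt x d ↔ d = Sum.inl x := by
  constructor
  · rintro ⟨hv, hp⟩
    rcases d with ⟨i, l⟩ | y
    · obtain ⟨x1, x2⟩ := x
      have hi : i = x1 := Sum.inl.inj hv
      have hl : l = x2 := hp
      rw [hi, hl]
    · exact absurd hv (by simp [MSystem.vert, sys, vertf])
  · rintro rfl
    exact ⟨rfl, rfl⟩

/-- position of the external dart of diode `p` within the tour of its attachment. -/
def jd (p : DoorLoc) : ℕ := ((e.symm (epp u p) - e.symm (cpp u p) : Fin 6) : ℕ)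

lemma jd_le (p : DoorLoc) : jd u e p ≤ 5 := by
  rw [jd]
  have := (e.symm (epp u p) - e.symm (cpp u p)).isLt
  omega

lemma jd_pos (p : DoorLoc) : 1 ≤ jd u e p := by
  rcases Nat.eq_zero_or_pos (jd u e p) with h | h
  · exfalso
    have h0 : e.symm (epp u p) - e.symm (cpp u p) = 0 := by
      have := Fin.val_eq_val (e.symm (epp u p) - e.symm (cpp u p)) 0
      rw [jd] at h
      exact Fin.ext (by simpa using h)
    have := sub_eq_zero.mp h0
    exact epp_ne_cpp u p (e.symm.injective this)
  · exact h

lemma nxt_iter_jd (p : DoorLoc) : (nxt e)^[jd u e p] (cpp u p) = epp u p := by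
  rw [nxt_iter, jd, Fin.cast_val_eq_self]
  have : e.symm (cpp u p) + (e.symm (epp u p) - e.symm (cpp u p)) = e.symm (epp u p) := by ring
  rw [this, Equiv.apply_symm_apply]

lemma tour_ext (p : DoorLoc) :
    tourD u w e (alf w p) (2 * jd u e p - 1) = Sum.inl ((some p : II), epp u p) := by
  have hj1 := jd_pos u e p
  have hj5 := jd_le u e p
  rw [tourD, if_neg (by omega), if_neg (by omega), if_pos (by omega),
    show (2 * jd u e p - 1 + 1) / 2 = jd u e p from by omega, alf_invol, nxt_iter_jd]

lemma nxt_iter_eq_iff (k1 k2 : ℕ) (l : DoorLoc) :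
    (nxt e)^[k1] l = (nxt e)^[k2] l ↔ k1 % 6 = k2 % 6 := by
  rw [nxt_iter, nxt_iter]
  constructor
  · intro h
    have h2 := e.injective h
    have h3 : ((k1 : ℕ) : Fin 6) = ((k2 : ℕ) : Fin 6) := by
      have := add_left_cancel h2
      exact this
    have := congrArg Fin.val h3
    simpa [Fin.val_natCast] using this
  · intro h
    have h3 : ((k1 : ℕ) : Fin 6) = ((k2 : ℕ) : Fin 6) := by
      apply Fin.ext
      simpa [Fin.val_natCast] using h
    rw [h3]

lemma tour_eq_ext_iff (q cc : DoorLoc) (m : ℕ) (h0 : 0 < m) (h12 : m < 12) :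
    tourD u w e q m = Sum.inl ((some cc : II), epp u cc) ↔
      (m % 2 = 1 ∧ cc = alf w q ∧ ((m + 1) / 2) % 6 = jd u e cc % 6) := by
  rcases Nat.even_or_odd m with hev | hod
  · have hm2 : m % 2 = 0 := Nat.even_iff.mp hev
    rw [tourD, if_neg (by omega), if_neg (by omega), if_neg (by omega)]
    simp [hm2]
  · have hm2 : m % 2 = 1 := Nat.odd_iff.mp hod
    rw [tourD, if_neg (by omega), if_neg (by omega), if_pos hm2]
    constructor
    · intro h
      obtain ⟨hcc, hl⟩ := Prod.mk.injEq _ _ _ _ ▸ Sum.inl.inj h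
      have hcc' : cc = alf w q := by
        exact (Option.some_injective _ hcc).symm
      refine ⟨hm2, hcc', ?_⟩
      rw [← hcc'] at hl
      have : (nxt e)^[(m + 1) / 2] (cpp u cc) = (nxt e)^[jd u e cc] (cpp u cc) := by
        rw [hl, nxt_iter_jd]
      exact (nxt_iter_eq_iff e _ _ _).1 this
    · rintro ⟨-, hcc, hmod⟩
      subst hcc
      have : (nxt e)^[(m + 1) / 2] (cpp u (alf w q)) =
          (nxt e)^[jd u e (alf w q)] (cpp u (alf w q)) :=
        (nxt_iter_eq_iff e _ _ _).2 hmod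
      rw [this, nxt_iter_jd]

lemma face_cond (hu : uok u dO dT dC) (a : DoorLoc) (da db : Dart)
    (hda : (S8).IsDartAt (extf u a) da)
    (hdb : (S8).IsDartAt (extf u (alf w (nxt e (alf w a)))) db) :
    ∃ k, 0 < k ∧ (S8).facePerm^[k] da = db ∧
      ∀ j, 0 < j → j < k → ∀ cc, ¬ (S8).IsDartAt (extf u cc) ((S8).facePerm^[j] da) := by
  set b := alf w (nxt e (alf w a)) with hb
  have hab : alf w b = nxt e (alf w a) := by rw [hb, alf_invol]
  rw [isDartAt_iff] at hda hdb
  subst hda; subst hdb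
  set ta := 2 * jd u e a - 1 with hta
  set tb := 2 * jd u e b with htb0
  have hta1 : 1 ≤ ta := by have := jd_pos u e a; omega
  have hta11 : ta ≤ 9 := by have := jd_le u e a; omega
  have htb1 : 1 ≤ 2 * jd u e b - 1 := by have := jd_pos u e b; omega
  have htb9 : 2 * jd u e b - 1 ≤ 9 := by have := jd_le u e b; omega
  have hFP : ∀ (k : ℕ) (d : Dart), (S8).facePerm^[k] d = (Ff u w e)^[k] d := fun _ _ => rfl
  have hEa : (Ff u w e)^[ta] (Sum.inl ((none : II), alf w a)) =
      Sum.inl ((some a : II), epp u a) := by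
    rw [tour_iter u w e (alf w a) ta (by omega), hta, tour_ext]
  have hshift : ∀ j : ℕ, (Ff u w e)^[j] (Sum.inl ((some a : II), epp u a)) =
      (Ff u w e)^[j + ta] (Sum.inl ((none : II), alf w a)) := by
    intro j
    rw [Function.iterate_add_apply, hEa]
  refine ⟨12 - ta + (2 * jd u e b - 1), by omega, ?_, ?_⟩
  · simp only [extf]
    rw [hFP, hshift, show 12 - ta + (2 * jd u e b - 1) + ta = (2 * jd u e b - 1) + 12 from
      by omega, Function.iterate_add_apply, tour12, ← hab,
      tour_iter u w e (alf w b) _ (by omega), tour_ext]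
  · intro j hj0 hjk cc
    simp only [extf]
    rw [hFP, hshift, isDartAt_iff]
    set m := j + ta with hm
    have hm0 : ta < m := by omega
    have hmk : m < 12 + (2 * jd u e b - 1) := by omega
    rcases le_or_gt m 12 with hm12 | hm12
    · rcases eq_or_lt_of_le hm12 with hm12e | hm12l
      · rw [hm12e, tour12]
        simp [extf]
      · rw [tour_iter u w e (alf w a) m (by omega)]
        intro hcon
        rw [tour_eq_ext_iff u w e _ _ _ (by omega) hm12l] at hcon
        obtain ⟨hmodd, hcca, hmod⟩ := hcon
        rw [hcca, alf_invol] at hmod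
        have hjda5 := jd_le u e a
        have hjda1 := jd_pos u e a
        omega
    · have hsplit : (Ff u w e)^[m] (Sum.inl ((none : II), alf w a)) =
          (Ff u w e)^[m - 12] (Sum.inl ((none : II), alf w b)) := by
        conv_lhs => rw [show m = (m - 12) + 12 from by omega]
        rw [Function.iterate_add_apply, tour12, hab]
      rw [hsplit, tour_iter u w e (alf w b) (m - 12) (by omega)]
      intro hcon
      rw [tour_eq_ext_iff u w e _ _ _ (by omega) (by omega)] at hcon
      obtain ⟨hmodd, hcca, hmod⟩ := hcon
      rw [hcca, alf_invol] at hmod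
      have hjdb5 := jd_le u e b
      have hjdb1 := jd_pos u e b
      omega

end Face

end MD8
namespace MD8

lemma alf_zero : ∀ l, alf 0 l = l := by decide

lemma map_alf_zero (cL : List DoorLoc) : cL.map (alf 0) = cL := by
  rw [show alf 0 = id from funext alf_zero, List.map_id]

lemma rot6 {l : List DoorLoc} (hl : l.length = 6) (n : ℕ) : l.rotate n = l.rotate (n % 6) := by
  conv_rhs => rw [← hl]
  rw [List.rotate_mod]

lemma flip_check : ∀ w : Fin 4, w = 0 ∨ ∀ n, n < 6 → ∀ m, m < 6 →
    ((case8Cyc.map (alf w)).rotate n ≠ case8Cyc.rotate m ∧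
     (case8Cyc.map (alf w)).rotate n ≠ case8Cyc.reverse.rotate m ∧
     ((case8Cyc.map (alf w)).reverse).rotate n ≠ case8Cyc.rotate m ∧
     ((case8Cyc.map (alf w)).reverse).rotate n ≠ case8Cyc.reverse.rotate m) := by decide

lemma len_c8 : case8Cyc.length = 6 := rfl

lemma flip_not (w : Fin 4) (hw0 : w ≠ 0) (cL : List DoorLoc)
    (hc8 : CycEquiv case8Cyc cL) : ¬ CycEquiv case8Cyc (cL.map (alf w)) := by
  have hlen1 : (case8Cyc.map (alf w)).length = 6 := by rw [List.length_map]; rfl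
  have hlen2 : ((case8Cyc.map (alf w)).reverse).length = 6 := by
    rw [List.length_reverse, List.length_map]; rfl
  have hlen3 : (case8Cyc.reverse).length = 6 := by rw [List.length_reverse]; rfl
  have hdec := (flip_check w).resolve_left hw0
  rintro ⟨m, hm⟩
  obtain ⟨n, hn⟩ := hc8
  rcases hn with hn | hn <;> rcases hm with hm | hm <;> subst hn <;>
    rw [List.map_rotate] at hm
  · rw [rot6 hlen1, rot6 len_c8] at hm
    exact (hdec _ (Nat.mod_lt _ (by omega)) _ (Nat.mod_lt _ (by omega))).1 hm
  · rw [rot6 hlen1, rot6 hlen3] at hm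
    exact (hdec _ (Nat.mod_lt _ (by omega)) _ (Nat.mod_lt _ (by omega))).2.1 hm
  · rw [List.map_reverse, rot6 hlen2, rot6 len_c8] at hm
    exact (hdec _ (Nat.mod_lt _ (by omega)) _ (Nat.mod_lt _ (by omega))).2.2.1 hm
  · rw [List.map_reverse, rot6 hlen2, rot6 hlen3] at hm
    exact (hdec _ (Nat.mod_lt _ (by omega)) _ (Nat.mod_lt _ (by omega))).2.2.2 hm

lemma uok_of (dO dT dC : Bool) (h : dO = true ∨ dT = true ∨ dC = true) :
    ∃ u : Fin 3, uok u dO dT dC := by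
  rcases h with h | h | h
  · exact ⟨0, fun _ => h, fun hh => absurd hh (by decide), fun hh => absurd hh (by decide)⟩
  · exact ⟨1, fun hh => absurd hh (by decide), fun _ => h, fun hh => absurd hh (by decide)⟩
  · exact ⟨2, fun hh => absurd hh (by decide), fun hh => absurd hh (by decide), fun _ => h⟩

def alfPerm (w : Fin 4) : Equiv.Perm DoorLoc :=
  Function.Involutive.toPerm (alf w) (alf_invol w)

lemma nxt_trans (w : Fin 4) (e : Fin 6 ≃ DoorLoc) (l : DoorLoc) :
    nxt (e.trans (alfPerm w)) l = alf w (nxt e (alf w l)) := rfl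

lemma alf_inj (w : Fin 4) : Function.Injective (alf w) :=
  Function.Involutive.injective (alf_invol w)

/-- The main construction: for any admissible `u`, `w`, the mixed door with embedding `c`
planarly simulates the fully directed door with embedding `c.map (alf w)`. -/
lemma main_sim (dO dT dC : Bool) (c : List DoorLoc) (h1 : c.Nodup) (h2 : ∀ l, l ∈ c)
    (u : Fin 3) (w : Fin 4) (hu : uok u dO dT dC) (hw : wok w dO dT dC) :
    PlanarlySimulates (mkPG (⟨doorTrav dO dT dC, c, h1, h2⟩ : PGData Bool DoorLoc))
      (mkPG (⟨doorTrav true true true, c.map (alf w), h1.map (alf_inj w),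
        fun l => List.mem_map.2 ⟨alf w l, h2 _, alf_invol w l⟩⟩ : PGData Bool DoorLoc)) := by
  obtain ⟨e, he, hget⟩ := exists_equiv c h1 h2
  set c' := c.map (alf w) with hc'
  have h1' : c'.Nodup := h1.map (alf_inj w)
  have h2' : ∀ l, l ∈ c' := fun l => List.mem_map.2 ⟨alf w l, h2 _, alf_invol w l⟩
  obtain ⟨e₂, he₂, hget₂⟩ := exists_equiv c' h1' h2'
  have hl6 : c.length = 6 := length_eq_six c h1 h2
  have he2eq : e₂ = e.trans (alfPerm w) := by
    apply Equiv.ext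
    intro k
    have hk' : (k : ℕ) < c'.length := by rw [hc', List.length_map, hl6]; exact k.isLt
    have hkc : (k : ℕ) < c.length := by rw [hl6]; exact k.isLt
    have hg2 := hget₂ k hk'
    have hg1 := hget k hkc
    simp only [List.get_eq_getElem, hc', List.getElem_map] at hg2
    simp only [List.get_eq_getElem] at hg1
    rw [hg1] at hg2
    rw [← hg2]
    rfl
  have hcyc' : ∀ a, cycNext c' a = alf w (nxt e (alf w a)) := by
    intro a
    rw [he₂ a, he2eq, nxt_trans]
  show PlanarlySimulatesFam (fam8 dO dT dC c h1 h2) _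
  refine ⟨sys dO dT dC c h1 h2 u w e he, extf u, encf u, ?_, ?_, ?_, ?_, ?_⟩
  · intro a b hab
    have := congrArg Prod.fst hab
    exact Option.some_injective _ this
  · intro s s' h
    exact encf_inj u h
  · exact sys_planar dO dT dC c h1 h2 u w e he
  · intro s s' a b
    exact sim_iff dO dT dC c h1 h2 u w e he hu hw s s' a b
  · refine ⟨true, fun a da db hda hdb => ?_⟩
    rw [if_pos rfl] at hdb
    have hred : cycNext ((mkPG (⟨doorTrav true true true, c', h1', h2'⟩ :
        PGData Bool DoorLoc)).data.cyc) a = alf w (nxt e (alf w a)) := hcyc' a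
    rw [hred] at hdb
    exact face_cond dO dT dC c h1 h2 u w e he hu a da db hda hdb

end MD8
/-- Every mixed door (some but not all tunnels directed), in every
planar embedding, can planarly simulate some fully directed door that is not the
Case-8 OTtocC door. -/
theorem mixed_door_planarly_simulates_a_directed_door_not_case8
    (dO dT dC : Bool)
    (hdir : dO = true ∨ dT = true ∨ dC = true)
    (hundir : dO = false ∨ dT = false ∨ dC = false)
    (c : List DoorLoc) (h1 : c.Nodup) (h2 : ∀ l, l ∈ c) :
    ∃ (c' : List DoorLoc) (h1' : c'.Nodup) (h2' : ∀ l, l ∈ c'),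
      ¬ CycEquiv case8Cyc c' ∧
      PlanarlySimulates (mkPG (⟨doorTrav dO dT dC, c, h1, h2⟩ : PGData Bool DoorLoc))
        (mkPG (⟨doorTrav true true true, c', h1', h2'⟩ : PGData Bool DoorLoc)) := by
  obtain ⟨u, hu⟩ := MD8.uok_of dO dT dC hdir
  by_cases hc8 : CycEquiv case8Cyc c
  · -- the embedding is the Case-8 one: flip the diodes on one undirected tunnel
    have hex : ∃ w : Fin 4, w ≠ 0 ∧ MD8.wok w dO dT dC := by
      rcases hundir with h | h | h
      · exact ⟨1, by decide, fun _ => h, fun hh => absurd hh (by decide),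
          fun hh => absurd hh (by decide)⟩
      · exact ⟨2, by decide, fun hh => absurd hh (by decide), fun _ => h,
          fun hh => absurd hh (by decide)⟩
      · exact ⟨3, by decide, fun hh => absurd hh (by decide),
          fun hh => absurd hh (by decide), fun _ => h⟩
    obtain ⟨w, hw0, hw⟩ := hex
    exact ⟨c.map (MD8.alf w), h1.map (MD8.alf_inj w),
      fun l => List.mem_map.2 ⟨MD8.alf w l, h2 _, MD8.alf_invol w l⟩,
      MD8.flip_not w hw0 c hc8,
      MD8.main_sim dO dT dC c h1 h2 u w hu hw⟩
  · -- keep the embedding as it is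
    have hw : MD8.wok 0 dO dT dC :=
      ⟨fun hh => absurd hh (by decide), fun hh => absurd hh (by decide),
        fun hh => absurd hh (by decide)⟩
    refine ⟨c.map (MD8.alf 0), h1.map (MD8.alf_inj 0),
      fun l => List.mem_map.2 ⟨MD8.alf 0 l, h2 _, MD8.alf_invol 0 l⟩, ?_,
      MD8.main_sim dO dT dC c h1 h2 u 0 hu hw⟩
    rw [MD8.map_alf_zero]
    exact hc8
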